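/- arXiv:1105.1679 — 7 statements merged into one kernel-verified Lean document; each statement's English description precedes it below -/
import Mathlib

section
/- Let (g,T) be a toral pair satisfying (IA1), (IA2), and σ an automorphism of g satisfying (A1)–(A4). Suppose α, β ∈ R with α ≠ β and π(α) = π(β). Then for x ∈ g_α and y ∈ g_{-β}, one has π([x,y]) = 0, where π is the projection onto the fixed-point subalgebra g^0 of σ. -/
open Finset

section IARADefs

variable (F L : Type*) [Field F] [LieRing L] [LieAlgebra F L]

/-- The root space of a toral subalgebra `T` attached to a linear functional `α`
(viewed as a functional on `L`; only its values on `T` matter). -/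
def gSpace (T : LieSubalgebra F L) (α : L →ₗ[F] F) : Submodule F L where
  carrier := {x | ∀ t ∈ T, ⁅t, x⁆ = α t • x}
  add_mem' := by
    intro a b ha hb t ht
    rw [lie_add, ha t ht, hb t ht, smul_add]
  zero_mem' := by intro t ht; simp
  smul_mem' := by
    intro c x hx t ht
    rw [lie_smul, hx t ht, smul_comm]

/-- `(g, T)` is a toral pair with root system (a set of representatives) `R`. -/
structure IsToralPair (T : LieSubalgebra F L) (R : Set (L →ₗ[F] F)) : Prop where
  root_ne : ∀ α ∈ R, gSpace F L T α ≠ ⊥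
  decomp : (⨆ α ∈ R, gSpace F L T α) = ⊤
  complete : ∀ β : L →ₗ[F] F, gSpace F L T β ≠ ⊥ → ∃ α ∈ R, ∀ t ∈ T, α t = β t

/-- (IA1): `B` is an invariant nondegenerate symmetric bilinear form on `g`
whose restriction to `T` is nondegenerate. -/
structure IsInvForm (B : LinearMap.BilinForm F L) (T : LieSubalgebra F L) : Prop where
  symm : ∀ x y : L, B x y = B y x
  inv : ∀ x y z : L, B ⁅x, y⁆ z = B x ⁅y, z⁆
  nondeg : ∀ x : L, (∀ y : L, B x y = 0) → x = 0
  nondegT : ∀ t ∈ T, (∀ s ∈ T, B t s = 0) → t = 0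

/-- (IA2). -/
def IA2 (T : LieSubalgebra F L) (R : Set (L →ₗ[F] F)) : Prop :=
  ∀ α ∈ R, (∃ t ∈ T, α t ≠ 0) →
    ∃ e ∈ gSpace F L T α, ∃ f ∈ gSpace F L T (-α), ⁅e, f⁆ ≠ 0 ∧ ⁅e, f⁆ ∈ T

/-- (IA2)′ (division condition). -/
def IA2' (T : LieSubalgebra F L) (R : Set (L →ₗ[F] F)) : Prop :=
  ∀ α ∈ R, (∃ t ∈ T, α t ≠ 0) → ∀ e ∈ gSpace F L T α, e ≠ 0 →
    ∃ f ∈ gSpace F L T (-α), ⁅e, f⁆ ≠ 0 ∧ ⁅e, f⁆ ∈ T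

/-- (IA3): for nonisotropic roots `α` (i.e. `(α,α) = B t_α t_α ≠ 0` for a
representative `t_α ∈ T` of `α`), `ad x` is locally nilpotent for `x ∈ g_α`. -/
def IA3 (B : LinearMap.BilinForm F L) (T : LieSubalgebra F L)
    (R : Set (L →ₗ[F] F)) : Prop :=
  ∀ α ∈ R, ∀ tα ∈ T, (∀ t ∈ T, α t = B tα t) → B tα tα ≠ 0 →
    ∀ x ∈ gSpace F L T α, ∀ y : L, ∃ n : ℕ, ((LieAlgebra.ad F L x) ^ n) y = 0

/-- An invariant affine reflection algebra. -/
structure IsIARA (B : LinearMap.BilinForm F L) (T : LieSubalgebra F L)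
    (R : Set (L →ₗ[F] F)) : Prop where
  nonzero : ∃ x : L, x ≠ 0
  toral : IsToralPair F L T R
  ia1 : IsInvForm F L B T
  ia2 : IA2 F L T R
  ia3 : IA3 F L B T R

/-- A division invariant affine reflection algebra. -/
structure IsDivIARA (B : LinearMap.BilinForm F L) (T : LieSubalgebra F L)
    (R : Set (L →ₗ[F] F)) : Prop where
  nonzero : ∃ x : L, x ≠ 0
  toral : IsToralPair F L T R
  ia1 : IsInvForm F L B T
  ia2' : IA2' F L T R
  ia3 : IA3 F L B T R

variable {F L}

/-- (A4): the centralizer of `T⁰` in `g⁰` is contained in `g₀`. -/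
def A4Cond (T : LieSubalgebra F L) (σ : L ≃ₗ[F] L) : Prop :=
  ∀ x : L, σ x = x → (∀ t ∈ T, σ t = t → ⁅t, x⁆ = 0) → ∀ t ∈ T, ⁅t, x⁆ = 0

/-- The projection `π = (1/m) ∑ σ^i` of `g` onto the fixed points of `σ`. -/
noncomputable def piL (σ : L ≃ₗ[F] L) (m : ℕ) : L →ₗ[F] L :=
  (m : F)⁻¹ • ∑ i ∈ Finset.range m, ((σ ^ i : L ≃ₗ[F] L) : L →ₗ[F] L)

/-- The induced projection on functionals: `π(α) = (1/m) ∑ σ^i(α)`,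
`σ(α) = α ∘ σ⁻¹`. -/
noncomputable def piF (σ : L ≃ₗ[F] L) (m : ℕ) (α : L →ₗ[F] F) : L →ₗ[F] F :=
  (m : F)⁻¹ • ∑ i ∈ Finset.range m, α ∘ₗ ((σ⁻¹ ^ i : L ≃ₗ[F] L) : L →ₗ[F] L)

/-- The projection `π_j = (1/m) ∑ ζ^{-ji} σ^i` onto the `ζ^j`-eigenspace. -/
noncomputable def piJ (σ : L ≃ₗ[F] L) (m : ℕ) (ζ : F) (j : ℤ) : L →ₗ[F] L :=
  (m : F)⁻¹ • ∑ i ∈ Finset.range m,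
    ζ ^ (-(j * (i : ℤ))) • ((σ ^ i : L ≃ₗ[F] L) : L →ₗ[F] L)

/-- `x̄_j = ∑_{i=0}^{m/ℓ-1} ζ^{-jiℓ} σ^{iℓ}(x)`. -/
noncomputable def xbar (σ : L ≃ₗ[F] L) (m ℓ : ℕ) (ζ : F) (j : ℤ) (x : L) : L :=
  ∑ i ∈ Finset.range (m / ℓ), ζ ^ (-(j * (i : ℤ) * (ℓ : ℤ))) • ((σ ^ (i * ℓ)) x)

/-- Indecomposability of a set of roots with respect to a pairing `p`. -/
def Indecomposable {α : Type*} (p : α → α → F) (R : Set α) : Prop :=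
  ¬ ∃ R₁ R₂ : Set α, R₁.Nonempty ∧ R₂.Nonempty ∧ R₁ ∩ R₂ = ∅ ∧
      R₁ ∪ R₂ = {x ∈ R | p x x ≠ 0} ∧ ∀ x ∈ R₁, ∀ y ∈ R₂, p x y = 0

end IARADefs

/-- if `α ≠ β` are roots with `π(α) = π(β)` then for
`x ∈ g_α`, `y ∈ g_{-β}` we have `π([x,y]) = 0`. -/
theorem stmt7 {F L : Type*} [Field F] [CharZero F] [LieRing L] [LieAlgebra F L]
    (T : LieSubalgebra F L) (R : Set (L →ₗ[F] F))
    (B : LinearMap.BilinForm F L)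
    (htoral : IsToralPair F L T R) (hIA1 : IsInvForm F L B T)
    (hIA2 : IA2 F L T R)
    (m : ℕ) (hm : 0 < m) (ζ : F) (hζ : IsPrimitiveRoot ζ m)
    (σ : L ≃ₗ[F] L) (hσLie : ∀ x y : L, σ ⁅x, y⁆ = ⁅σ x, σ y⁆)
    (hσm : σ ^ m = 1)
    (hσT : ∀ t ∈ T, σ t ∈ T)
    (hσB : ∀ x y : L, B (σ x) (σ y) = B x y)
    (hA4 : A4Cond T σ)
    (α β : L →ₗ[F] F) (hα : α ∈ R) (hβ : β ∈ R)
    (hne : ∃ t ∈ T, α t ≠ β t)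
    (hπ : ∀ t ∈ T, σ t = t → α t = β t)
    (x y : L) (hx : x ∈ gSpace F L T α) (hy : y ∈ gSpace F L T (-β)) :
    piL σ m ⁅x, y⁆ = 0 := by
  classical
  have hmul : ∀ (f g : L ≃ₗ[F] L) (a : L), (f * g) a = f (g a) := fun _ _ _ => rfl
  have hliesum : ∀ (t : L) (s : Finset ℕ) (f : ℕ → L),
      ⁅t, ∑ i ∈ s, f i⁆ = ∑ i ∈ s, ⁅t, f i⁆ := by
    intro t s f
    simpa only [LieAlgebra.ad_apply] using map_sum (LieAlgebra.ad F L t) f s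
  set z : L := ⁅x, y⁆ with hzdef
  -- z is a weight vector of weight α - β
  have hzeig : ∀ t ∈ T, ⁅t, z⁆ = (α t - β t) • z := by
    intro t ht
    have h1 := hx t ht
    have h2 := hy t ht
    have hβ' : (-β) t = -(β t) := rfl
    rw [hβ', neg_smul] at h2
    calc ⁅t, ⁅x, y⁆⁆ = ⁅⁅t, x⁆, y⁆ + ⁅x, ⁅t, y⁆⁆ := by rw [leibniz_lie]
      _ = ⁅α t • x, y⁆ + ⁅x, -(β t • y)⁆ := by rw [h1, h2]
      _ = α t • ⁅x, y⁆ - β t • ⁅x, y⁆ := by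
          rw [smul_lie, lie_neg, lie_smul]; abel
      _ = (α t - β t) • z := by rw [sub_smul]
  -- powers of σ are Lie algebra maps
  have hσpowLie : ∀ (i : ℕ) (a b : L), (σ ^ i) ⁅a, b⁆ = ⁅(σ ^ i) a, (σ ^ i) b⁆ := by
    intro i
    induction i with
    | zero => intro a b; simp
    | succ n ih =>
      intro a b
      have hps : σ ^ (n + 1) = σ * σ ^ n := by rw [pow_succ']
      simp only [hps, hmul, ih, hσLie]
  -- powers of σ preserve T
  have hσpowT : ∀ (i : ℕ), ∀ t ∈ T, (σ ^ i) t ∈ T := by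
    intro i
    induction i with
    | zero => intro t ht; simpa using ht
    | succ n ih =>
      intro t ht
      have : σ ^ (n + 1) = σ * σ ^ n := by rw [pow_succ']
      rw [this]
      exact hσT _ (ih t ht)
  -- σ⁻¹ = σ^(m-1)
  have hσinv : σ⁻¹ = σ ^ (m - 1) := by
    have : σ * σ ^ (m - 1) = 1 := by
      rw [← pow_succ', Nat.sub_add_cancel hm]
      exact hσm
    exact inv_eq_of_mul_eq_one_right this
  have hσinvT : ∀ (i : ℕ), ∀ t ∈ T, (σ⁻¹ ^ i) t ∈ T := by
    intro i t ht
    rw [hσinv, ← pow_mul]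
    exact hσpowT _ t ht
  -- the weights
  set c : ℕ → L → F := fun i t => α ((σ⁻¹ ^ i) t) - β ((σ⁻¹ ^ i) t) with hcdef
  set u : ℕ → L := fun i => (σ ^ i) z with hudef
  -- each u i is a weight vector of weight c i
  have hueig : ∀ (i : ℕ), ∀ t ∈ T, ⁅t, u i⁆ = c i t • u i := by
    intro i t ht
    have hst : (σ ^ i) ((σ⁻¹ ^ i) t) = t := by
      rw [inv_pow]
      exact LinearEquiv.apply_symm_apply _ t
    calc ⁅t, u i⁆ = ⁅(σ ^ i) ((σ⁻¹ ^ i) t), (σ ^ i) z⁆ := by rw [hst]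
      _ = (σ ^ i) ⁅(σ⁻¹ ^ i) t, z⁆ := (hσpowLie i _ _).symm
      _ = (σ ^ i) ((α ((σ⁻¹ ^ i) t) - β ((σ⁻¹ ^ i) t)) • z) := by
          rw [hzeig _ (hσinvT i t ht)]
      _ = c i t • u i := by rw [map_smul]
  -- witnesses where c i is nonzero
  obtain ⟨t0, ht0T, ht0⟩ := hne
  set tt : ℕ → L := fun i => (σ ^ i) t0 with httdef
  have httT : ∀ i, tt i ∈ T := fun i => hσpowT i t0 ht0T
  have hcnz : ∀ i, c i (tt i) ≠ 0 := by
    intro i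
    have : (σ⁻¹ ^ i) ((σ ^ i) t0) = t0 := by
      rw [inv_pow]
      exact LinearEquiv.symm_apply_apply _ t0
    simp only [hcdef, httdef, this]
    exact sub_ne_zero_of_ne ht0
  -- w = π(z)
  set w : L := piL σ m z with hwdef
  have hwsum : w = (m : F)⁻¹ • ∑ i ∈ Finset.range m, u i := by
    simp only [hwdef, piL, LinearMap.smul_apply, LinearMap.coe_sum,
      Finset.sum_apply, LinearEquiv.coe_coe, hudef]
  -- σ fixes w
  have hσw : σ w = w := by
    rw [hwsum, map_smul, map_sum]
    congr 1
    have hterm : ∀ i, σ (u i) = (σ ^ (i + 1)) z := by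
      intro i
      simp only [hudef]
      rw [pow_succ']
      rfl
    calc ∑ i ∈ Finset.range m, σ (u i)
        = ∑ i ∈ Finset.range m, (σ ^ (i + 1)) z := by
          exact Finset.sum_congr rfl fun i _ => hterm i
      _ = ∑ i ∈ Finset.range m, u i := by
          have h1 : ∑ i ∈ Finset.range (m + 1), (σ ^ i) z
              = ∑ i ∈ Finset.range m, (σ ^ (i + 1)) z + (σ ^ 0) z :=
            Finset.sum_range_succ' _ m
          have h2 : ∑ i ∈ Finset.range (m + 1), (σ ^ i) z
              = ∑ i ∈ Finset.range m, (σ ^ i) z + (σ ^ m) z :=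
            Finset.sum_range_succ _ m
          have h3 : (σ ^ m) z = (σ ^ 0) z := by rw [hσm]; rfl
          have h4 := h1.symm.trans h2
          rw [h3] at h4
          exact add_right_cancel h4
  -- w centralizes T⁰
  have hwT0 : ∀ t ∈ T, σ t = t → ⁅t, w⁆ = 0 := by
    intro t ht hσt
    have hfixpow : ∀ i : ℕ, (σ⁻¹ ^ i) t = t := by
      intro i
      induction i with
      | zero => rfl
      | succ n ih =>
        have hinvfix : σ⁻¹ t = t := by
          have hst : σ (σ⁻¹ t) = σ t := by
            rw [show σ⁻¹ = σ.symm from rfl, σ.apply_symm_apply, hσt]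
          exact σ.injective hst
        rw [pow_succ, hmul, hinvfix, ih]
    have hcit : ∀ i : ℕ, c i t = 0 := by
      intro i
      simp only [hcdef, hfixpow i]
      rw [hπ t ht hσt, sub_self]
    rw [hwsum, lie_smul, hliesum]
    have : ∀ i ∈ Finset.range m, ⁅t, u i⁆ = 0 := by
      intro i _
      rw [hueig i t ht, hcit i, zero_smul]
    rw [Finset.sum_congr rfl this, Finset.sum_const_zero, smul_zero]
  -- by (A4), w centralizes all of T
  have hwT : ∀ t ∈ T, ⁅t, w⁆ = 0 := hA4 w hσw hwT0
  -- the coefficients of the elimination process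
  set s : ℕ → ℕ → F := fun j i => 1 - (c j (tt j))⁻¹ * c i (tt j) with hsdef
  have key : ∀ k : ℕ, w = (m : F)⁻¹ •
      ∑ i ∈ Finset.range m, (∏ j ∈ Finset.range k, s j i) • u i := by
    intro k
    induction k with
    | zero => simpa using hwsum
    | succ n ih =>
      have hbr : ⁅tt n, w⁆ = (m : F)⁻¹ •
          ∑ i ∈ Finset.range m, ((∏ j ∈ Finset.range n, s j i) * c i (tt n)) • u i := by
        rw [ih, lie_smul]
        have := hliesum (tt n) (Finset.range m)
          (fun i => (∏ j ∈ Finset.range n, s j i) • u i)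
        rw [this]
        congr 1
        refine Finset.sum_congr rfl fun i _ => ?_
        rw [lie_smul, hueig i (tt n) (httT n), smul_smul]
      have h0 : ⁅tt n, w⁆ = 0 := hwT (tt n) (httT n)
      have : w = w - (c n (tt n))⁻¹ • ⁅tt n, w⁆ := by rw [h0, smul_zero, sub_zero]
      rw [this, hbr, ih]
      rw [smul_comm ((c n (tt n))⁻¹) ((m : F)⁻¹), ← smul_sub]
      congr 1
      rw [Finset.smul_sum, ← Finset.sum_sub_distrib]
      refine Finset.sum_congr rfl fun i _ => ?_
      rw [smul_smul, ← sub_smul, Finset.prod_range_succ]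
      congr 1
      simp only [hsdef]
      ring
  have hfin := key m
  have hzero : ∀ i ∈ Finset.range m, (∏ j ∈ Finset.range m, s j i) • u i = 0 := by
    intro i hi
    have hsii : s i i = 0 := by
      simp only [hsdef]
      rw [inv_mul_cancel₀ (hcnz i), sub_self]
    have hp : (∏ j ∈ Finset.range m, s j i) = 0 :=
      Finset.prod_eq_zero hi hsii
    rw [hp, zero_smul]
  rw [Finset.sum_congr rfl hzero, Finset.sum_const_zero, smul_zero] at hfin
  exact hfin
end

section
/- Assume m is prime. Then condition (A4) (the centralizer of T^0 in g^0 is contained in g_0) for a finite-order automorphism σ of a toral pair (g,T) satisfying (IA1),(IA2) is equivalent to: π(α) ≠ 0 for every nonzero root α ∈ R. -/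
open Finset

section Stmt8Aux

attribute [local instance] Classical.propDecidable

variable {F L : Type*} [Field F] [LieRing L] [LieAlgebra F L]

lemma lie_sum' {L' : Type*} [LieRing L'] (t : L') {ι : Type*} (g : ι → L') (s : Finset ι) :
    ⁅t, ∑ i ∈ s, g i⁆ = ∑ i ∈ s, ⁅t, g i⁆ := by
  induction s using Finset.cons_induction with
  | empty => simp
  | cons a s ha ih => rw [Finset.sum_cons, Finset.sum_cons, lie_add, ih]

lemma mem_gSpace_iff {T : LieSubalgebra F L} {α : L →ₗ[F] F} {x : L} :
    x ∈ gSpace F L T α ↔ ∀ t ∈ T, ⁅t, x⁆ = α t • x := Iff.rfl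

/-- Key independence lemma: if a finite sum of root vectors vanishes, then the sum over
each "restriction to `T`" equivalence class vanishes. -/
lemma classSum_eq_zero (T : LieSubalgebra F L) {ι : Type*} :
    ∀ (n : ℕ) (s : Finset ι), s.card ≤ n → ∀ (β : ι → L →ₗ[F] F) (v : ι → L),
      (∀ i ∈ s, v i ∈ gSpace F L T (β i)) → ∑ i ∈ s, v i = 0 →
      ∀ i0 ∈ s, ∑ j ∈ s.filter (fun j => ∀ t ∈ T, β j t = β i0 t), v j = 0 := by
  intro n
  induction n with
  | zero =>
    intro s hs β v _ _ i0 hi0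
    rw [Nat.le_zero, Finset.card_eq_zero] at hs
    subst hs; simp at hi0
  | succ n ih =>
    intro s hs β v hv hsum i0 hi0
    by_cases hall : ∀ j ∈ s, ∀ t ∈ T, β j t = β i0 t
    · rwa [Finset.filter_true_of_mem hall]
    · push_neg at hall
      obtain ⟨i1, hi1, t, htT, hne⟩ := hall
      have hne10 : i1 ≠ i0 := by rintro rfl; exact hne rfl
      set w : ι → L := fun j => (β j t - β i1 t) • v j with hw
      have hsumw : ∑ j ∈ s.erase i1, w j = 0 := by
        have h1 : ∑ j ∈ s, w j = 0 := by
          have hterm : ∀ j ∈ s, w j = (LieAlgebra.ad F L t) (v j) - β i1 t • v j := by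
            intro j hj
            rw [hw]
            simp only [LieAlgebra.ad_apply]
            rw [hv j hj t htT, sub_smul]
          rw [Finset.sum_congr rfl hterm, Finset.sum_sub_distrib, ← Finset.smul_sum, hsum,
            smul_zero, sub_zero, ← map_sum, hsum, map_zero]
        have h2 : w i1 = 0 := by rw [hw]; simp
        rw [Finset.sum_erase_eq_sub hi1, h1, h2, sub_zero]
      have hvw : ∀ j ∈ s.erase i1, w j ∈ gSpace F L T (β j) := fun j hj =>
        Submodule.smul_mem _ _ (hv j (Finset.mem_of_mem_erase hj))
      have hcard : (s.erase i1).card ≤ n := by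
        have h1 := Finset.card_erase_of_mem hi1
        have h2 : 1 ≤ s.card := Finset.card_pos.mpr ⟨i1, hi1⟩
        omega
      have hmem : i0 ∈ s.erase i1 := Finset.mem_erase.mpr ⟨Ne.symm hne10, hi0⟩
      have key := ih (s.erase i1) hcard β w hvw hsumw i0 hmem
      have hfe : (s.erase i1).filter (fun j => ∀ t' ∈ T, β j t' = β i0 t')
          = s.filter (fun j => ∀ t' ∈ T, β j t' = β i0 t') := by
        rw [Finset.filter_erase, Finset.erase_eq_of_notMem]
        simp only [Finset.mem_filter]
        rintro ⟨-, hp⟩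
        exact hne (hp t htT)
      rw [hfe] at key
      have key2 : (β i0 t - β i1 t) • ∑ j ∈ s.filter (fun j => ∀ t' ∈ T, β j t' = β i0 t'), v j
          = 0 := by
        rw [Finset.smul_sum, ← key]
        refine Finset.sum_congr rfl fun j hj => ?_
        obtain ⟨-, hp⟩ := Finset.mem_filter.mp hj
        rw [hw]
        simp only []
        rw [hp t htT]
      have hc0 : (β i0 t - β i1 t) ≠ 0 := sub_ne_zero.mpr (Ne.symm hne)
      exact (smul_eq_zero.mp key2).resolve_left hc0

end Stmt8Aux

/-- for `m` prime, (A4) is equivalent to: `π(α) ≠ 0` for every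
nonzero root `α ∈ R`. -/
theorem stmt8 {F L : Type*} [Field F] [CharZero F] [LieRing L] [LieAlgebra F L]
    (T : LieSubalgebra F L) (R : Set (L →ₗ[F] F))
    (B : LinearMap.BilinForm F L)
    (htoral : IsToralPair F L T R) (hIA1 : IsInvForm F L B T)
    (hIA2 : IA2 F L T R)
    (m : ℕ) (hm : Nat.Prime m) (ζ : F) (hζ : IsPrimitiveRoot ζ m)
    (σ : L ≃ₗ[F] L) (hσLie : ∀ x y : L, σ ⁅x, y⁆ = ⁅σ x, σ y⁆)
    (hσm : σ ^ m = 1)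
    (hσT : ∀ t ∈ T, σ t ∈ T)
    (hσB : ∀ x y : L, B (σ x) (σ y) = B x y) :
    A4Cond T σ ↔
      ∀ α ∈ R, (∃ t ∈ T, α t ≠ 0) → ∃ t ∈ T, σ t = t ∧ α t ≠ 0 := by
  classical
  have hTpow : ∀ (k : ℕ) (t : L), t ∈ T → (σ ^ k) t ∈ T := by
    intro k
    induction k with
    | zero => intro t ht; simpa using ht
    | succ k ih =>
      intro t ht
      rw [pow_succ]
      exact ih _ (hσT t ht)
  have hfixpow : ∀ (k : ℕ) (t : L), σ t = t → (σ ^ k) t = t := by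
    intro k
    induction k with
    | zero => intro t _; simp
    | succ k ih =>
      intro t ht
      rw [pow_succ]
      show (σ ^ k) (σ t) = t
      rw [ht]
      exact ih t ht
  have hLiepow : ∀ (k : ℕ) (x y : L), (σ ^ k) ⁅x, y⁆ = ⁅(σ ^ k) x, (σ ^ k) y⁆ := by
    intro k
    induction k with
    | zero => intro x y; simp
    | succ k ih =>
      intro x y
      rw [pow_succ']
      show σ ((σ ^ k) ⁅x, y⁆) = ⁅σ ((σ ^ k) x), σ ((σ ^ k) y)⁆
      rw [ih, hσLie]
  have hσmapp : ∀ y : L, (σ ^ m) y = y := by intro y; rw [hσm]; rfl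
  have hiter : ∀ (γ : L →ₗ[F] F) (d : ℕ), (∀ t ∈ T, γ ((σ ^ d) t) = γ t) →
      ∀ (k : ℕ), ∀ t ∈ T, γ ((σ ^ (k * d)) t) = γ t := by
    intro γ d hd k
    induction k with
    | zero => intro t _; simp
    | succ k ih =>
      intro t ht
      have heq : (σ ^ ((k + 1) * d)) t = (σ ^ (k * d)) ((σ ^ d) t) := by
        rw [add_mul, one_mul, pow_add]; rfl
      rw [heq, ih _ (hTpow d t ht), hd t ht]
  have hbrk : ∀ (γ : L →ₗ[F] F) (e : L), e ∈ gSpace F L T γ → ∀ i ≤ m, ∀ t ∈ T,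
      ⁅t, (σ ^ i) e⁆ = γ ((σ ^ (m - i)) t) • (σ ^ i) e := by
    intro γ e he i him t ht
    have h1 : (σ ^ i) ((σ ^ (m - i)) t) = t := by
      have h2 : (σ ^ i) ((σ ^ (m - i)) t) = (σ ^ (i + (m - i))) t := by rw [pow_add]; rfl
      rw [h2, Nat.add_sub_cancel' him, hσmapp]
    calc ⁅t, (σ ^ i) e⁆ = (σ ^ i) ⁅(σ ^ (m - i)) t, e⁆ := by rw [hLiepow, h1]
    _ = (σ ^ i) (γ ((σ ^ (m - i)) t) • e) := by rw [he _ (hTpow _ t ht)]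
    _ = γ ((σ ^ (m - i)) t) • (σ ^ i) e := map_smul _ _ _
  have htel : ∀ y : L, σ (∑ i ∈ Finset.range m, (σ ^ i) y) = ∑ i ∈ Finset.range m, (σ ^ i) y := by
    intro y
    rw [map_sum]
    have h2 : ∑ i ∈ Finset.range m, σ ((σ ^ i) y) = ∑ i ∈ Finset.range m, (σ ^ (i + 1)) y :=
      Finset.sum_congr rfl fun i _ => by rw [pow_succ']; rfl
    rw [h2]
    have h3 := Finset.sum_range_succ' (fun i => (σ ^ i) y) m
    have h4 := Finset.sum_range_succ (fun i => (σ ^ i) y) m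
    have h5 := h3.symm.trans h4
    simp only [pow_zero, hσmapp] at h5
    have h6 : (1 : L ≃ₗ[F] L) y = y := rfl
    rw [h6] at h5
    exact add_right_cancel h5
  constructor
  · intro hA4 α hαR hex
    obtain ⟨t0, ht0T, ht0⟩ := hex
    by_contra hcon
    push_neg at hcon
    by_cases hc : ∀ t ∈ T, α (σ t) = α t
    · have hstep : ∀ t ∈ T, α ((σ ^ 1) t) = α t := by
        intro t ht; rw [pow_one]; exact hc t ht
      have hall : ∀ k : ℕ, ∀ t ∈ T, α ((σ ^ k) t) = α t := by
        intro k t ht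
        have := hiter α 1 hstep k t ht
        rwa [mul_one] at this
      have hsT : (∑ i ∈ Finset.range m, (σ ^ i) t0) ∈ T :=
        sum_mem fun i _ => hTpow i t0 ht0T
      have h0 : α (∑ i ∈ Finset.range m, (σ ^ i) t0) = 0 := hcon _ hsT (htel t0)
      rw [map_sum] at h0
      have hsimp : ∑ i ∈ Finset.range m, α ((σ ^ i) t0) = (m : F) * α t0 := by
        rw [Finset.sum_congr rfl fun i _ => hall i t0 ht0T, Finset.sum_const,
          Finset.card_range, nsmul_eq_mul]
      rw [hsimp] at h0
      have hm0 : (m : F) ≠ 0 := Nat.cast_ne_zero.mpr hm.pos.ne'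
      exact ht0 ((mul_eq_zero.mp h0).resolve_left hm0)
    · push_neg at hc
      obtain ⟨t1, ht1T, ht1⟩ := hc
      haveI : Fact (Nat.Prime m) := ⟨hm⟩
      have hdist : ∀ j : ℕ, 0 < j → j < m → ¬ (∀ t ∈ T, α ((σ ^ (m - j)) t) = α t) := by
        intro j hj0 hjm hinv
        set d := m - j with hd
        have hd0 : 0 < d := by omega
        have hdm : d < m := by omega
        have hdvd : ¬ m ∣ d := Nat.not_dvd_of_pos_of_lt hd0 hdm
        have hu : (d : ZMod m) ≠ 0 := fun h => hdvd ((ZMod.natCast_eq_zero_iff d m).mp h)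
        set k := ((d : ZMod m)⁻¹).val with hk
        have hkd : (k * d) % m = 1 := by
          have h1 : ((k * d : ℕ) : ZMod m) = ((1 : ℕ) : ZMod m) := by
            push_cast
            rw [hk, ZMod.natCast_val, ZMod.cast_id, inv_mul_cancel₀ hu]
          have h2 := (ZMod.natCast_eq_natCast_iff' (k * d) 1 m).mp h1
          rwa [Nat.mod_eq_of_lt hm.one_lt] at h2
        have hpe : σ ^ (k * d) = σ := by
          conv_lhs => rw [← Nat.div_add_mod (k * d) m, hkd]
          rw [pow_add, pow_mul, hσm, one_pow, one_mul, pow_one]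
        have hfin := hiter α d hinv k t1 ht1T
        rw [hpe] at hfin
        exact ht1 hfin
      obtain ⟨e, he, f, hf, hef, hefT⟩ := hIA2 α hαR ⟨t0, ht0T, ht0⟩
      have he0 : e ≠ 0 := by rintro rfl; rw [zero_lie] at hef; exact hef rfl
      set β : ℕ → (L →ₗ[F] F) := fun i => α ∘ₗ ((σ ^ (m - i) : L ≃ₗ[F] L) : L →ₗ[F] L) with hβ
      have hβapp : ∀ (i : ℕ) (t : L), β i t = α ((σ ^ (m - i)) t) := fun i t => rfl
      set v : ℕ → L := fun i => β i t0 • (σ ^ i) e with hv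
      have hvmem : ∀ i ∈ Finset.range m, v i ∈ gSpace F L T (β i) := by
        intro i hi
        refine Submodule.smul_mem _ _ (mem_gSpace_iff.mpr fun t ht => ?_)
        rw [hβapp]
        exact hbrk α e he i (le_of_lt (Finset.mem_range.mp hi)) t ht
      set x := ∑ i ∈ Finset.range m, (σ ^ i) e with hx
      have hxfix : σ x = x := htel e
      have hxcomm : ∀ t ∈ T, σ t = t → ⁅t, x⁆ = 0 := by
        intro t ht hfix
        rw [hx, lie_sum']
        refine Finset.sum_eq_zero fun i hi => ?_
        rw [hbrk α e he i (le_of_lt (Finset.mem_range.mp hi)) t ht, hfixpow (m - i) t hfix,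
          hcon t ht hfix, zero_smul]
      have h0 : ⁅t0, x⁆ = 0 := hA4 x hxfix hxcomm t0 ht0T
      have hsum0 : ∑ i ∈ Finset.range m, v i = 0 := by
        rw [← h0, hx, lie_sum']
        refine Finset.sum_congr rfl fun i hi => ?_
        rw [hv]
        exact (hbrk α e he i (le_of_lt (Finset.mem_range.mp hi)) t0 ht0T).symm
      have hkey := classSum_eq_zero T m (Finset.range m) (by simp) β v hvmem hsum0 0
        (Finset.mem_range.mpr hm.pos)
      have hfil : (Finset.range m).filter (fun j => ∀ t ∈ T, β j t = β 0 t) = {0} := by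
        ext j
        simp only [Finset.mem_filter, Finset.mem_range, Finset.mem_singleton]
        constructor
        · rintro ⟨hjm, hp⟩
          by_contra hj0
          refine hdist j (Nat.pos_of_ne_zero hj0) hjm ?_
          intro t ht
          have hp' := hp t ht
          rw [hβapp, hβapp, Nat.sub_zero, hσmapp] at hp'
          exact hp'
        · rintro rfl
          exact ⟨hm.pos, fun t ht => rfl⟩
      rw [hfil, Finset.sum_singleton] at hkey
      have hfin : α t0 • e = 0 := by
        rw [← hkey, hv]
        simp only [hβapp, Nat.sub_zero, hσmapp, pow_zero]
        rfl
      exact he0 ((smul_eq_zero.mp hfin).resolve_left ht0)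
  · intro hR x hxfix hxcomm t0 ht0T
    by_contra hne
    have hxtop : x ∈ (⨆ γ : R, gSpace F L T (γ : L →ₗ[F] F)) := by
      rw [iSup_subtype'' R (gSpace F L T), htoral.decomp]
      exact Submodule.mem_top
    rw [Submodule.mem_iSup_iff_exists_finsupp] at hxtop
    obtain ⟨c, hcmem, hcx⟩ := hxtop
    have hxs : x = ∑ γ ∈ c.support, c γ := by rw [← hcx]; rfl
    set κ : R → (T.toSubmodule →ₗ[F] F) :=
      fun γ => (γ : L →ₗ[F] F) ∘ₗ T.toSubmodule.subtype with hκ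
    have hκiff : ∀ γ δ : R, κ γ = κ δ ↔ ∀ t ∈ T, (γ : L →ₗ[F] F) t = (δ : L →ₗ[F] F) t := by
      intro γ δ
      constructor
      · intro h t ht
        have := LinearMap.congr_fun h ⟨t, ht⟩
        simpa [hκ] using this
      · intro h
        ext t
        exact h t t.2
    have hbr1 : ∀ s1 ∈ T, ⁅s1, x⁆ = ∑ γ ∈ c.support, ((γ : L →ₗ[F] F) s1) • c γ := by
      intro s1 hs1
      rw [hxs, lie_sum']
      exact Finset.sum_congr rfl fun γ _ => hcmem γ s1 hs1
    have hfib := Finset.sum_fiberwise_of_maps_to (s := c.support) (t := c.support.image κ)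
      (g := κ) (fun γ hγ => Finset.mem_image_of_mem κ hγ)
      (fun γ => ((γ : L →ₗ[F] F) t0) • c γ)
    have hnz : ∑ y ∈ c.support.image κ, ∑ γ ∈ c.support.filter (fun γ => κ γ = y),
        ((γ : L →ₗ[F] F) t0) • c γ ≠ 0 := by
      rw [hfib, ← hbr1 t0 ht0T]
      exact hne
    obtain ⟨y, hy, hyne⟩ := Finset.exists_ne_zero_of_sum_ne_zero hnz
    obtain ⟨γs, hγs, rfl⟩ := Finset.mem_image.mp hy
    have hfac : ∀ s1 ∈ T, ∑ γ ∈ c.support.filter (fun γ => κ γ = κ γs),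
        ((γ : L →ₗ[F] F) s1) • c γ
        = ((γs : L →ₗ[F] F) s1) • ∑ γ ∈ c.support.filter (fun γ => κ γ = κ γs), c γ := by
      intro s1 hs1
      rw [Finset.smul_sum]
      refine Finset.sum_congr rfl fun γ hγ => ?_
      rw [((hκiff γ γs).mp (Finset.mem_filter.mp hγ).2) s1 hs1]
    rw [hfac t0 ht0T] at hyne
    have hα0 : (γs : L →ₗ[F] F) t0 ≠ 0 := fun h => hyne (by rw [h, zero_smul])
    have hcs0 : ∑ γ ∈ c.support.filter (fun γ => κ γ = κ γs), c γ ≠ 0 :=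
      fun h => hyne (by rw [h, smul_zero])
    obtain ⟨s1, hs1T, hs1fix, hs1α⟩ := hR (γs : L →ₗ[F] F) γs.2 ⟨t0, ht0T, hα0⟩
    have h0 : ⁅s1, x⁆ = 0 := hxcomm s1 hs1T hs1fix
    have hsum1 : ∑ γ ∈ c.support, ((γ : L →ₗ[F] F) s1) • c γ = 0 := by
      rw [← hbr1 s1 hs1T, h0]
    have hvm : ∀ γ ∈ c.support, ((γ : L →ₗ[F] F) s1) • c γ ∈ gSpace F L T (γ : L →ₗ[F] F) :=
      fun γ _ => Submodule.smul_mem _ _ (hcmem γ)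
    have hkey := classSum_eq_zero T c.support.card c.support le_rfl
      (fun γ => (γ : L →ₗ[F] F)) (fun γ => ((γ : L →ₗ[F] F) s1) • c γ) hvm hsum1 γs hγs
    have hfeq : c.support.filter
        (fun γ => ∀ t ∈ T, ((γ : R) : L →ₗ[F] F) t = (γs : L →ₗ[F] F) t)
        = c.support.filter (fun γ => κ γ = κ γs) := by
      refine Finset.filter_congr fun γ _ => ?_
      constructor
      · exact fun h => (hκiff γ γs).mpr h
      · exact fun h => (hκiff γ γs).mp h
    rw [hfeq, hfac s1 hs1T] at hkey
    exact hcs0 ((smul_eq_zero.mp hkey).resolve_left hs1α)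
end

section
/- With the above hypotheses, for α ∈ R, x ∈ g_α, y ∈ g_{-α}, and j ∈ ℤ: (i) [π_j(x), π_{-j}(y)] = (1/m) π([x̄_j, y]); (ii) (π_j(x), π_{-j}(y)) = (1/m)(x̄_j, y). -/
open Finset

section AuxLemmas

open Polynomial

variable {F : Type*} [Field F]

lemma aux_exists_forall_ne_zero {V : Type*} [AddCommGroup V] [Module F V] [Infinite F]
    {ι : Type*} (s : Finset ι) (f : ι → V →ₗ[F] F)
    (hf : ∀ b ∈ s, ∃ v, f b v ≠ 0) :
    ∃ v, ∀ b ∈ s, f b v ≠ 0 := by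
  classical
  induction s using Finset.induction_on with
  | empty => exact ⟨0, fun b hb => absurd hb (Finset.notMem_empty b)⟩
  | @insert a s ha ih =>
    obtain ⟨v, hv⟩ := ih (fun b hb => hf b (Finset.mem_insert_of_mem hb))
    obtain ⟨u, hu⟩ := hf a (Finset.mem_insert_self a s)
    set bad : Finset F :=
      insert (-(f a v) / (f a u)) (s.image fun b => -(f b v) / (f b u)) with hbad
    obtain ⟨c, hc⟩ := Infinite.exists_notMem_finset bad
    refine ⟨v + c • u, ?_⟩
    intro b hb
    rcases Finset.mem_insert.mp hb with rfl | hbs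
    · intro h0
      rw [map_add, map_smul, smul_eq_mul] at h0
      have hceq : c = -(f b v) / (f b u) :=
        (eq_div_iff hu).mpr (by linear_combination h0)
      exact hc (hceq ▸ Finset.mem_insert_self _ _)
    · by_cases hbu : f b u = 0
      · intro h0
        rw [map_add, map_smul, smul_eq_mul, hbu, mul_zero, add_zero] at h0
        exact hv b hbs h0
      · intro h0
        rw [map_add, map_smul, smul_eq_mul] at h0
        have hceq : c = -(f b v) / (f b u) :=
          (eq_div_iff hbu).mpr (by linear_combination h0)
        exact hc (hceq ▸ Finset.mem_insert_of_mem
          (Finset.mem_image_of_mem (fun b => -(f b v) / (f b u)) hbs))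

lemma aux_aeval_eigen {V : Type*} [AddCommGroup V] [Module F V]
    (A : Module.End F V) (μ : F) (v : V) (h : A v = μ • v) (p : F[X]) :
    (Polynomial.aeval A) p v = p.eval μ • v := by
  have hpow : ∀ n : ℕ, (A ^ n) v = μ ^ n • v := by
    intro n
    induction n with
    | zero => simp
    | succ n ih =>
      rw [pow_succ, Module.End.mul_apply, h, map_smul, ih, smul_smul, pow_succ,
        mul_comm]
  induction p using Polynomial.induction_on' with
  | add p q hp hq => rw [map_add, LinearMap.add_apply, hp, hq, eval_add, add_smul]
  | monomial n a =>
    rw [Polynomial.aeval_monomial, Polynomial.eval_monomial, Module.End.mul_apply,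
      hpow, Module.algebraMap_end_apply, smul_smul]

lemma aux_eigen_sum_zero {V : Type*} [AddCommGroup V] [Module F V] {ι : Type*}
    (s : Finset ι) (A : Module.End F V) (u : ι → V) (c : ι → F)
    (hc : ∀ b ∈ s, c b ≠ 0) (heig : ∀ b ∈ s, A (u b) = c b • u b)
    (hw : A (∑ b ∈ s, u b) = 0) : ∑ b ∈ s, u b = 0 := by
  classical
  set p : F[X] := ∏ v ∈ s.image c, (X - C v) with hp
  have h1 : (Polynomial.aeval A) p (∑ b ∈ s, u b) = p.eval 0 • ∑ b ∈ s, u b :=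
    aux_aeval_eigen A 0 _ (by rw [hw, zero_smul]) p
  have h2 : (Polynomial.aeval A) p (∑ b ∈ s, u b) = 0 := by
    rw [map_sum]
    apply Finset.sum_eq_zero
    intro b hb
    rw [aux_aeval_eigen A (c b) _ (heig b hb) p]
    have hz : p.eval (c b) = 0 := by
      rw [hp, Polynomial.eval_prod]
      exact Finset.prod_eq_zero (Finset.mem_image_of_mem c hb) (by simp)
    rw [hz, zero_smul]
  have h0 : p.eval 0 ≠ 0 := by
    rw [hp, Polynomial.eval_prod]
    apply Finset.prod_ne_zero_iff.mpr
    intro v hv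
    obtain ⟨b, hb, rfl⟩ := Finset.mem_image.mp hv
    simpa using hc b hb
  rw [h2] at h1
  exact (smul_eq_zero.mp h1.symm).resolve_left h0

lemma aux_sum_shift {M : Type*} [AddCommMonoid M] (m : ℕ) (hm : 0 < m) (b : ℕ)
    (f : ℕ → M) :
    ∑ a ∈ Finset.range m, f a = ∑ a ∈ Finset.range m, f ((a + b) % m) := by
  obtain ⟨q, r, hrm, hb⟩ : ∃ q r, r < m ∧ b = m * q + r :=
    ⟨b / m, b % m, Nat.mod_lt _ hm, (Nat.div_add_mod b m).symm⟩
  apply Finset.sum_nbij' (fun a => (a + (m - r)) % m) (fun a => (a + b) % m)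
  · intro a _; exact Finset.mem_range.mpr (Nat.mod_lt _ hm)
  · intro a _; exact Finset.mem_range.mpr (Nat.mod_lt _ hm)
  · intro a haa
    have ha := Finset.mem_range.mp haa
    rw [Nat.mod_add_mod]
    have hmm1 : m - r + r = m := by omega
    have hmm2 : m * (q + 1) = m * q + m := by ring
    have : a + (m - r) + b = a + m * (q + 1) := by omega
    rw [this, Nat.add_mul_mod_self_left, Nat.mod_eq_of_lt ha]
  · intro a haa
    have ha := Finset.mem_range.mp haa
    rw [Nat.mod_add_mod]
    have hmm1 : m - r + r = m := by omega
    have hmm2 : m * (q + 1) = m * q + m := by ring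
    have : a + b + (m - r) = a + m * (q + 1) := by omega
    rw [this, Nat.add_mul_mod_self_left, Nat.mod_eq_of_lt ha]
  · intro a haa
    have ha := Finset.mem_range.mp haa
    congr 1
    rw [Nat.mod_add_mod]
    have hmm1 : m - r + r = m := by omega
    have hmm2 : m * (q + 1) = m * q + m := by ring
    have : a + (m - r) + b = a + m * (q + 1) := by omega
    rw [this, Nat.add_mul_mod_self_left, Nat.mod_eq_of_lt ha]

lemma aux_sum_div {M : Type*} [AddCommMonoid M] (m ℓ : ℕ) (hℓ : 0 < ℓ)
    (hdvd : ℓ ∣ m) (f : ℕ → M) :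
    ∑ a ∈ (Finset.range m).filter (fun a => ℓ ∣ a), f a
      = ∑ i ∈ Finset.range (m / ℓ), f (i * ℓ) := by
  apply Finset.sum_nbij' (fun a => a / ℓ) (fun i => i * ℓ)
  · intro a ha
    rw [Finset.mem_filter, Finset.mem_range] at ha
    exact Finset.mem_range.mpr (Nat.div_lt_div_of_lt_of_dvd hdvd ha.1)
  · intro i hi
    rw [Finset.mem_range] at hi
    rw [Finset.mem_filter, Finset.mem_range]
    constructor
    · calc i * ℓ < (m / ℓ) * ℓ := (Nat.mul_lt_mul_right hℓ).mpr hi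
        _ = m := Nat.div_mul_cancel hdvd
    · exact dvd_mul_left ℓ i
  · intro a ha
    rw [Finset.mem_filter] at ha
    exact Nat.div_mul_cancel ha.2
  · intro i _
    exact Nat.mul_div_cancel i hℓ
  · intro a ha
    rw [Finset.mem_filter] at ha
    rw [Nat.div_mul_cancel ha.2]

end AuxLemmas

section LieAux

variable {F L : Type*} [Field F] [LieRing L] [LieAlgebra F L]

lemma aux_conj (σ : L ≃ₗ[F] L) (hσLie : ∀ x y : L, σ ⁅x, y⁆ = ⁅σ x, σ y⁆) :
    ∀ (b : ℕ) (t u : L), ⁅t, (σ ^ b) u⁆ = (σ ^ b) ⁅(σ⁻¹ ^ b) t, u⁆ := by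
  have hone : ∀ t u : L, ⁅t, σ u⁆ = σ ⁅σ⁻¹ t, u⁆ := by
    intro t u
    rw [hσLie]
    congr 1
    exact (σ.apply_symm_apply t).symm
  intro b
  induction b with
  | zero => intro t u; simp
  | succ b ih =>
    intro t u
    have h1 : (σ ^ (b + 1)) u = (σ ^ b) (σ u) := by rw [pow_succ]; rfl
    have h2 : (σ⁻¹ ^ (b + 1)) t = σ⁻¹ ((σ⁻¹ ^ b) t) := by rw [pow_succ']; rfl
    have h3 : (σ ^ (b + 1)) ⁅(σ⁻¹ ^ (b + 1)) t, u⁆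
        = (σ ^ b) (σ ⁅(σ⁻¹ ^ (b + 1)) t, u⁆) := by rw [pow_succ]; rfl
    rw [h1, ih t (σ u), hone, h3, h2]

lemma aux_lie_sum {F L : Type*} [Field F] [LieRing L] [LieAlgebra F L]
    {ι : Type*} (t : L) (s : Finset ι) (f : ι → L) :
    ⁅t, ∑ i ∈ s, f i⁆ = ∑ i ∈ s, ⁅t, f i⁆ := by
  have := map_sum (LieAlgebra.ad F L t) f s
  simpa only [LieAlgebra.ad_apply] using this

lemma aux_sum_lie {F L : Type*} [Field F] [LieRing L] [LieAlgebra F L]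
    {ι : Type*} (y : L) (s : Finset ι) (f : ι → L) :
    ⁅∑ i ∈ s, f i, y⁆ = ∑ i ∈ s, ⁅f i, y⁆ := by
  rw [← lie_skew, aux_lie_sum (F := F), ← Finset.sum_neg_distrib]
  exact Finset.sum_congr rfl fun i _ => lie_skew (f i) y

lemma aux_pi_vanish [CharZero F] (T : LieSubalgebra F L) (m : ℕ) (hm : 0 < m)
    (σ : L ≃ₗ[F] L) (hσLie : ∀ x y : L, σ ⁅x, y⁆ = ⁅σ x, σ y⁆)
    (hσm : σ ^ m = 1) (hσT : ∀ t ∈ T, σ t ∈ T) (hA4 : A4Cond T σ)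
    (β : L →ₗ[F] F) (hβfix : ∀ t ∈ T, σ t = t → β t = 0)
    (hβne : ∀ b : ℕ, ∃ t ∈ T, β ((σ⁻¹ ^ b) t) ≠ 0)
    (z : L) (hz : ∀ t ∈ T, ⁅t, z⁆ = β t • z) :
    ∑ b ∈ Finset.range m, (σ ^ b) z = 0 := by
  classical
  have hmulapply : ∀ (e f : L ≃ₗ[F] L) (w : L), (e * f) w = e (f w) := fun _ _ _ => rfl
  have hpowT : ∀ k, ∀ t ∈ T, (σ ^ k) t ∈ T := by
    intro k
    induction k with
    | zero => intro t ht; simpa using ht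
    | succ k ih =>
      intro t ht
      have h1 : (σ ^ (k + 1)) t = (σ ^ k) (σ t) := by rw [pow_succ]; rfl
      rw [h1]; exact ih _ (hσT t ht)
  have hinvT : ∀ t ∈ T, σ⁻¹ t ∈ T := by
    intro t ht
    have h1 : σ ^ (m - 1) * σ = 1 := by
      rw [← pow_succ, Nat.sub_add_cancel hm, hσm]
    have h2 : σ⁻¹ = σ ^ (m - 1) := (eq_inv_of_mul_eq_one_left h1).symm
    rw [h2]; exact hpowT _ t ht
  have hinvpowT : ∀ k, ∀ t ∈ T, (σ⁻¹ ^ k) t ∈ T := by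
    intro k
    induction k with
    | zero => intro t ht; simpa using ht
    | succ k ih =>
      intro t ht
      have h1 : (σ⁻¹ ^ (k + 1)) t = (σ⁻¹ ^ k) (σ⁻¹ t) := by rw [pow_succ]; rfl
      rw [h1]; exact ih _ (hinvT t ht)
  have hinvfix : ∀ t : L, σ t = t → σ⁻¹ t = t := by
    intro t h
    calc σ⁻¹ t = σ⁻¹ (σ t) := by rw [h]
      _ = (σ⁻¹ * σ) t := (hmulapply _ _ _).symm
      _ = t := by rw [inv_mul_cancel]; rfl
  have hinvpowfix : ∀ (k : ℕ) (t : L), σ t = t → (σ⁻¹ ^ k) t = t := by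
    intro k t h
    induction k with
    | zero => rfl
    | succ k ih =>
      have h1 : (σ⁻¹ ^ (k + 1)) t = σ⁻¹ ((σ⁻¹ ^ k) t) := by rw [pow_succ']; rfl
      rw [h1, ih, hinvfix t h]
  set w : L := ∑ b ∈ Finset.range m, (σ ^ b) z with hwdef
  -- w is σ-fixed
  have hσw : σ w = w := by
    rw [hwdef, map_sum]
    have h1 : ∀ b : ℕ, σ ((σ ^ b) z) = (σ ^ (b + 1)) z := by
      intro b; rw [pow_succ']; rfl
    calc ∑ b ∈ Finset.range m, σ ((σ ^ b) z)
        = ∑ b ∈ Finset.range m, (σ ^ (b + 1)) z := by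
          exact Finset.sum_congr rfl fun b _ => h1 b
      _ = ∑ b ∈ Finset.range (m + 1), (σ ^ b) z - (σ ^ 0) z := by
          rw [Finset.sum_range_succ']; abel
      _ = ∑ b ∈ Finset.range m, (σ ^ b) z + (σ ^ m) z - (σ ^ 0) z := by
          rw [Finset.sum_range_succ]
      _ = ∑ b ∈ Finset.range m, (σ ^ b) z := by
          rw [hσm, pow_zero]; simp
  -- eigen property of each summand
  have heigen : ∀ (b : ℕ), ∀ t ∈ T, ⁅t, (σ ^ b) z⁆ = β ((σ⁻¹ ^ b) t) • (σ ^ b) z := by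
    intro b t ht
    rw [aux_conj σ hσLie b t z, hz _ (hinvpowT b t ht), map_smul]
  -- bracket with σ-fixed elements of T vanishes
  have hcent : ∀ t ∈ T, σ t = t → ⁅t, w⁆ = 0 := by
    intro t ht htfix
    rw [hwdef, aux_lie_sum (F := F)]
    apply Finset.sum_eq_zero
    intro b _
    rw [heigen b t ht, hinvpowfix b t htfix, hβfix t ht htfix, zero_smul]
  have hall : ∀ t ∈ T, ⁅t, w⁆ = 0 := hA4 w hσw hcent
  -- choose a good element of T
  have hT : ∃ v : (T : Submodule F L), ∀ b ∈ Finset.range m,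
      ((β.comp (((σ⁻¹ ^ b : L ≃ₗ[F] L) : L →ₗ[F] L))).comp
        (T : Submodule F L).subtype) v ≠ 0 := by
    apply aux_exists_forall_ne_zero
    intro b _
    obtain ⟨t, ht, hne⟩ := hβne b
    exact ⟨⟨t, ht⟩, by simpa using hne⟩
  obtain ⟨v, hv⟩ := hT
  have hvT : (v : L) ∈ T := v.2
  apply aux_eigen_sum_zero (Finset.range m) (LieAlgebra.ad F L (v : L))
    (fun b => (σ ^ b) z) (fun b => β ((σ⁻¹ ^ b) (v : L)))
  · intro b hb
    simpa using hv b hb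
  · intro b hb
    rw [LieAlgebra.ad_apply]
    exact heigen b (v : L) hvT
  · rw [LieAlgebra.ad_apply]
    exact hall (v : L) hvT

end LieAux

/-- `[π_j(x), π_{-j}(y)] = (1/m) π([x̄_j, y])` and
`(π_j(x), π_{-j}(y)) = (1/m)(x̄_j, y)` for `x ∈ g_α`, `y ∈ g_{-α}`. -/
theorem stmt10 {F L : Type*} [Field F] [CharZero F] [LieRing L] [LieAlgebra F L]
    (T : LieSubalgebra F L) (R : Set (L →ₗ[F] F))
    (B : LinearMap.BilinForm F L)
    (htoral : IsToralPair F L T R) (hIA1 : IsInvForm F L B T)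
    (hIA2 : IA2 F L T R)
    (m : ℕ) (hm : 0 < m) (ζ : F) (hζ : IsPrimitiveRoot ζ m)
    (σ : L ≃ₗ[F] L) (hσLie : ∀ x y : L, σ ⁅x, y⁆ = ⁅σ x, σ y⁆)
    (hσm : σ ^ m = 1) (hσT : ∀ t ∈ T, σ t ∈ T)
    (hσB : ∀ x y : L, B (σ x) (σ y) = B x y)
    (hA4 : A4Cond T σ)
    (α : L →ₗ[F] F) (hα : α ∈ R)
    (ℓ : ℕ) (hℓpos : 0 < ℓ) (hℓdvd : ℓ ∣ m)
    (hℓfix : ∀ t ∈ T, α ((σ⁻¹ ^ ℓ) t) = α t)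
    (hℓmin : ∀ k : ℕ, 0 < k → k < ℓ → ∃ t ∈ T, α ((σ⁻¹ ^ k) t) ≠ α t)
    (x y : L) (hx : x ∈ gSpace F L T α) (hy : y ∈ gSpace F L T (-α)) (j : ℤ) :
    ⁅piJ σ m ζ j x, piJ σ m ζ (-j) y⁆ =
      (m : F)⁻¹ • piL σ m ⁅xbar σ m ℓ ζ j x, y⁆ ∧
    B (piJ σ m ζ j x) (piJ σ m ζ (-j) y) =
      (m : F)⁻¹ * B (xbar σ m ℓ ζ j x) y := by
  classical
  have hx' : ∀ t ∈ T, ⁅t, x⁆ = α t • x := hx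
  have hy' : ∀ t ∈ T, ⁅t, y⁆ = (-α) t • y := hy
  have hm0 : (m : F) ≠ 0 := Nat.cast_ne_zero.mpr hm.ne'
  have hζ1 : ζ ^ m = 1 := hζ.pow_eq_one
  have hζ0 : ζ ≠ 0 := by
    intro h
    rw [h, zero_pow hm.ne'] at hζ1
    exact zero_ne_one hζ1
  have hζmz : ζ ^ (m : ℤ) = 1 := by rw [zpow_natCast]; exact hζ1
  have hζcongr : ∀ k k' : ℤ, (m : ℤ) ∣ (k - k') → ζ ^ k = ζ ^ k' := by
    rintro k k' ⟨q, hq⟩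
    have hk : k = k' + (m : ℤ) * q := by linarith
    rw [hk, zpow_add₀ hζ0, zpow_mul, hζmz, one_zpow, mul_one]
  have hmulapply : ∀ (e f : L ≃ₗ[F] L) (w : L), (e * f) w = e (f w) := fun _ _ _ => rfl
  have hpowT : ∀ k, ∀ t ∈ T, (σ ^ k) t ∈ T := by
    intro k
    induction k with
    | zero => intro t ht; simpa using ht
    | succ k ih =>
      intro t ht
      have h1 : (σ ^ (k + 1)) t = (σ ^ k) (σ t) := by rw [pow_succ]; rfl
      rw [h1]; exact ih _ (hσT t ht)
  have hinvT : ∀ t ∈ T, σ⁻¹ t ∈ T := by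
    intro t ht
    have h1 : σ ^ (m - 1) * σ = 1 := by
      rw [← pow_succ, Nat.sub_add_cancel hm, hσm]
    have h2 : σ⁻¹ = σ ^ (m - 1) := (eq_inv_of_mul_eq_one_left h1).symm
    rw [h2]; exact hpowT _ t ht
  have hinvpowT : ∀ k, ∀ t ∈ T, (σ⁻¹ ^ k) t ∈ T := by
    intro k
    induction k with
    | zero => intro t ht; simpa using ht
    | succ k ih =>
      intro t ht
      have h1 : (σ⁻¹ ^ (k + 1)) t = (σ⁻¹ ^ k) (σ⁻¹ t) := by rw [pow_succ]; rfl
      rw [h1]; exact ih _ (hinvT t ht)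
  have hinvfix : ∀ t : L, σ t = t → σ⁻¹ t = t := by
    intro t h
    calc σ⁻¹ t = σ⁻¹ (σ t) := by rw [h]
      _ = (σ⁻¹ * σ) t := (hmulapply _ _ _).symm
      _ = t := by rw [inv_mul_cancel]; rfl
  have hinvpowfix : ∀ (k : ℕ) (t : L), σ t = t → (σ⁻¹ ^ k) t = t := by
    intro k t h
    induction k with
    | zero => rfl
    | succ k ih =>
      have h1 : (σ⁻¹ ^ (k + 1)) t = σ⁻¹ ((σ⁻¹ ^ k) t) := by rw [pow_succ']; rfl
      rw [h1, ih, hinvfix t h]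
  have hpowmod : ∀ a : ℕ, (σ ^ (a % m)) = σ ^ a := by
    intro a
    conv_rhs => rw [← Nat.div_add_mod a m]
    rw [pow_add, pow_mul, hσm, one_pow, one_mul]
  have hσpowLie : ∀ (b : ℕ) (u v : L), (σ ^ b) ⁅u, v⁆ = ⁅(σ ^ b) u, (σ ^ b) v⁆ := by
    intro b
    induction b with
    | zero => intro u v; rfl
    | succ b ih =>
      intro u v
      have h1 : ∀ w : L, (σ ^ (b + 1)) w = σ ((σ ^ b) w) := by
        intro w; rw [pow_succ']; rfl
      rw [h1, h1, h1, ih, hσLie]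
  have hBpow : ∀ (b : ℕ) (u v : L), B ((σ ^ b) u) ((σ ^ b) v) = B u v := by
    intro b
    induction b with
    | zero => intro u v; rfl
    | succ b ih =>
      intro u v
      have h1 : ∀ w : L, (σ ^ (b + 1)) w = σ ((σ ^ b) w) := by
        intro w; rw [pow_succ']; rfl
      rw [h1, h1, hσB, ih]
  -- period facts
  have hfixdvd : ∀ c : ℕ, ℓ ∣ c → ∀ t ∈ T, α ((σ⁻¹ ^ c) t) = α t := by
    rintro c ⟨q, rfl⟩
    induction q with
    | zero => intro t ht; rw [Nat.mul_zero, pow_zero]; rfl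
    | succ q ih =>
      intro t ht
      have h1 : (σ⁻¹ ^ (ℓ * (q + 1))) t = (σ⁻¹ ^ (ℓ * q)) ((σ⁻¹ ^ ℓ) t) := by
        rw [Nat.mul_succ, pow_add]; rfl
      rw [h1, ih _ (hinvpowT ℓ t ht), hℓfix t ht]
  have hnedvd : ∀ c : ℕ, ¬ ℓ ∣ c → ∃ t ∈ T, α ((σ⁻¹ ^ c) t) ≠ α t := by
    intro c hc
    have hr1 : 0 < c % ℓ := Nat.pos_of_ne_zero fun h => hc (Nat.dvd_of_mod_eq_zero h)
    have hr2 : c % ℓ < ℓ := Nat.mod_lt _ hℓpos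
    obtain ⟨t, ht, hne⟩ := hℓmin (c % ℓ) hr1 hr2
    refine ⟨t, ht, ?_⟩
    have h1 : (σ⁻¹ ^ c) t = (σ⁻¹ ^ (ℓ * (c / ℓ))) ((σ⁻¹ ^ (c % ℓ)) t) := by
      conv_lhs => rw [← Nat.div_add_mod c ℓ]
      rw [Nat.mul_comm ℓ (c / ℓ)] at *
      rw [pow_add]; rfl
    rw [h1, hfixdvd _ (dvd_mul_right ℓ (c / ℓ)) _ (hinvpowT _ t ht)]
    exact hne
  -- root space transport
  have hgx : ∀ (a : ℕ), ∀ t ∈ T, ⁅t, (σ ^ a) x⁆ = α ((σ⁻¹ ^ a) t) • (σ ^ a) x := by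
    intro a t ht
    rw [aux_conj σ hσLie a t x, hx' _ (hinvpowT a t ht), map_smul]
  have hgy : ∀ t ∈ T, ⁅t, y⁆ = -(α t) • y := by
    intro t ht
    simpa using hy' t ht
  -- skew invariance
  have hBskew : ∀ t u v : L, B ⁅t, u⁆ v = - B u ⁅t, v⁆ := by
    intro t u v
    have h1 : B ⁅u, t⁆ v = B u ⁅t, v⁆ := hIA1.inv u t v
    rw [← h1, ← lie_skew u t, map_neg, LinearMap.neg_apply, neg_neg]
  -- expansions of the projections
  have hpiJ : ∀ (j' : ℤ) (u : L), piJ σ m ζ j' u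
      = (m : F)⁻¹ • ∑ i ∈ Finset.range m, ζ ^ (-(j' * (i : ℤ))) • (σ ^ i) u := by
    intro j' u
    simp only [piJ, LinearMap.smul_apply, LinearMap.sum_apply, LinearEquiv.coe_coe]
  have hpiL : ∀ u : L, piL σ m u = (m : F)⁻¹ • ∑ i ∈ Finset.range m, (σ ^ i) u := by
    intro u
    simp only [piL, LinearMap.smul_apply, LinearMap.sum_apply, LinearEquiv.coe_coe]
  -- the key vanishing statement
  have hvanish : ∀ a : ℕ, ¬ ℓ ∣ a →
      ∑ b ∈ Finset.range m, (σ ^ b) ⁅(σ ^ a) x, y⁆ = 0 := by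
    intro a ha
    apply aux_pi_vanish T m hm σ hσLie hσm hσT hA4
      (α.comp ((σ⁻¹ ^ a : L ≃ₗ[F] L) : L →ₗ[F] L) - α)
    · intro t ht htfix
      simp only [LinearMap.sub_apply, LinearMap.comp_apply, LinearEquiv.coe_coe]
      rw [hinvpowfix a t htfix, sub_self]
    · intro b
      obtain ⟨t₀, ht₀, hne⟩ := hnedvd a ha
      refine ⟨(σ ^ b) t₀, hpowT b t₀ ht₀, ?_⟩
      have hcancel : (σ⁻¹ ^ b) ((σ ^ b) t₀) = t₀ := by
        have h1 : (σ⁻¹ ^ b) ((σ ^ b) t₀) = (σ⁻¹ ^ b * σ ^ b) t₀ := rfl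
        rw [h1, inv_pow, inv_mul_cancel]; rfl
      rw [hcancel]
      simp only [LinearMap.sub_apply, LinearMap.comp_apply, LinearEquiv.coe_coe]
      exact sub_ne_zero.mpr hne
    · intro t ht
      rw [leibniz_lie, hgx a t ht, hgy t ht, smul_lie, lie_smul]
      simp only [LinearMap.sub_apply, LinearMap.comp_apply, LinearEquiv.coe_coe]
      rw [sub_smul, neg_smul]
      abel
  -- scalar identity used in the shift
  have hscal : ∀ a b : ℕ, ζ ^ (-(j * (((a + b) % m : ℕ) : ℤ))) * ζ ^ (j * (b : ℤ))
      = ζ ^ (-(j * (a : ℤ))) := by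
    intro a b
    rw [← zpow_add₀ hζ0]
    apply hζcongr
    have hN : (a + b) % m + m * ((a + b) / m) = a + b := Nat.mod_add_div _ _
    refine ⟨j * (((a + b) / m : ℕ) : ℤ), ?_⟩
    have hZ : (((a + b) % m : ℕ) : ℤ) + (m : ℤ) * (((a + b) / m : ℕ) : ℤ)
        = (a : ℤ) + (b : ℤ) := by exact_mod_cast hN
    linear_combination (-j) * hZ
  constructor
  · -- part (i)
    set S : L := ∑ a ∈ Finset.range m, ζ ^ (-(j * (a : ℤ))) • ⁅(σ ^ a) x, y⁆ with hS
    have e1 : ⁅piJ σ m ζ j x, piJ σ m ζ (-j) y⁆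
        = (m : F)⁻¹ • ((m : F)⁻¹ •
          ∑ b ∈ Finset.range m, ∑ a ∈ Finset.range m,
            (ζ ^ (-(j * (a : ℤ))) * ζ ^ (j * (b : ℤ))) • ⁅(σ ^ a) x, (σ ^ b) y⁆) := by
      rw [hpiJ j x, hpiJ (-j) y, smul_lie, lie_smul, aux_sum_lie (F := F)]
      have h1 : ∀ a : ℕ,
          ⁅ζ ^ (-(j * (a : ℤ))) • (σ ^ a) x,
            ∑ b ∈ Finset.range m, ζ ^ (-((-j) * (b : ℤ))) • (σ ^ b) y⁆
          = ∑ b ∈ Finset.range m,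
              (ζ ^ (-(j * (a : ℤ))) * ζ ^ (j * (b : ℤ))) • ⁅(σ ^ a) x, (σ ^ b) y⁆ := by
        intro a
        rw [smul_lie, aux_lie_sum (F := F), Finset.smul_sum]
        apply Finset.sum_congr rfl
        intro b _
        rw [lie_smul, smul_smul]
        have h2 : -((-j) * (b : ℤ)) = j * (b : ℤ) := by ring
        rw [h2]
      rw [Finset.sum_congr rfl fun a _ => h1 a, Finset.sum_comm]
    have e2 : ∀ b ∈ Finset.range m,
        ∑ a ∈ Finset.range m,
          (ζ ^ (-(j * (a : ℤ))) * ζ ^ (j * (b : ℤ))) • ⁅(σ ^ a) x, (σ ^ b) y⁆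
        = (σ ^ b) S := by
      intro b _
      rw [hS, map_sum]
      rw [aux_sum_shift m hm b
        (fun a => (ζ ^ (-(j * (a : ℤ))) * ζ ^ (j * (b : ℤ))) • ⁅(σ ^ a) x, (σ ^ b) y⁆)]
      apply Finset.sum_congr rfl
      intro a _
      rw [map_smul, hscal a b, hpowmod (a + b)]
      have hs : (σ ^ (a + b)) x = (σ ^ b) ((σ ^ a) x) := by
        rw [add_comm a b, pow_add]; rfl
      rw [hs, ← hσpowLie]
    -- reduce to the vanishing statement
    have swap : ∀ (n : ℕ) (g : ℕ → F) (v : ℕ → L),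
        ∑ b ∈ Finset.range m, (σ ^ b) (∑ a ∈ Finset.range n, g a • v a)
        = ∑ a ∈ Finset.range n, g a • ∑ b ∈ Finset.range m, (σ ^ b) (v a) := by
      intro n g v
      calc ∑ b ∈ Finset.range m, (σ ^ b) (∑ a ∈ Finset.range n, g a • v a)
          = ∑ b ∈ Finset.range m, ∑ a ∈ Finset.range n, g a • (σ ^ b) (v a) := by
            apply Finset.sum_congr rfl
            intro b _
            rw [map_sum]
            exact Finset.sum_congr rfl fun a _ => map_smul _ _ _
        _ = ∑ a ∈ Finset.range n, ∑ b ∈ Finset.range m, g a • (σ ^ b) (v a) :=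
            Finset.sum_comm
        _ = ∑ a ∈ Finset.range n, g a • ∑ b ∈ Finset.range m, (σ ^ b) (v a) := by
            exact Finset.sum_congr rfl fun a _ => (Finset.smul_sum).symm
    have e4 : ⁅xbar σ m ℓ ζ j x, y⁆
        = ∑ i ∈ Finset.range (m / ℓ), ζ ^ (-(j * (i : ℤ) * (ℓ : ℤ))) • ⁅(σ ^ (i * ℓ)) x, y⁆ := by
      rw [xbar, aux_sum_lie (F := F)]
      exact Finset.sum_congr rfl fun i _ => smul_lie _ _ _
    have key : ∑ b ∈ Finset.range m, (σ ^ b) S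
        = ∑ b ∈ Finset.range m, (σ ^ b) ⁅xbar σ m ℓ ζ j x, y⁆ := by
      have rhs : ∑ b ∈ Finset.range m, (σ ^ b) ⁅xbar σ m ℓ ζ j x, y⁆
          = ∑ i ∈ Finset.range (m / ℓ), ζ ^ (-(j * (i : ℤ) * (ℓ : ℤ))) •
              ∑ b ∈ Finset.range m, (σ ^ b) ⁅(σ ^ (i * ℓ)) x, y⁆ := by
        rw [Finset.sum_congr rfl fun b _ => congrArg _ e4]
        exact swap (m / ℓ) _ _
      have lhs : ∑ b ∈ Finset.range m, (σ ^ b) S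
          = ∑ a ∈ Finset.range m, ζ ^ (-(j * (a : ℤ))) •
              ∑ b ∈ Finset.range m, (σ ^ b) ⁅(σ ^ a) x, y⁆ := by
        rw [hS]
        exact swap m _ _
      rw [lhs, rhs]
      rw [← Finset.sum_filter_add_sum_filter_not (Finset.range m) (fun a => ℓ ∣ a)]
      have hzero : ∑ a ∈ (Finset.range m).filter (fun a => ¬ ℓ ∣ a),
          ζ ^ (-(j * (a : ℤ))) • ∑ b ∈ Finset.range m, (σ ^ b) ⁅(σ ^ a) x, y⁆ = 0 := by
        apply Finset.sum_eq_zero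
        intro a ha
        rw [Finset.mem_filter] at ha
        rw [hvanish a ha.2, smul_zero]
      rw [hzero, add_zero]
      rw [aux_sum_div m ℓ hℓpos hℓdvd
        (fun a => ζ ^ (-(j * (a : ℤ))) • ∑ b ∈ Finset.range m, (σ ^ b) ⁅(σ ^ a) x, y⁆)]
      apply Finset.sum_congr rfl
      intro i _
      have hexp : -(j * ((i * ℓ : ℕ) : ℤ)) = -(j * (i : ℤ) * (ℓ : ℤ)) := by
        push_cast; ring
      rw [hexp]
    calc ⁅piJ σ m ζ j x, piJ σ m ζ (-j) y⁆
        = (m : F)⁻¹ • ((m : F)⁻¹ • ∑ b ∈ Finset.range m, (σ ^ b) S) := by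
          rw [e1]
          congr 2
          exact Finset.sum_congr rfl e2
      _ = (m : F)⁻¹ • ((m : F)⁻¹ •
            ∑ b ∈ Finset.range m, (σ ^ b) ⁅xbar σ m ℓ ζ j x, y⁆) := by rw [key]
      _ = (m : F)⁻¹ • piL σ m ⁅xbar σ m ℓ ζ j x, y⁆ := by rw [hpiL]
  · -- part (ii)
    have hBvanish : ∀ a : ℕ, ¬ ℓ ∣ a → B ((σ ^ a) x) y = 0 := by
      intro a ha
      obtain ⟨t₀, ht₀, hne⟩ := hnedvd a ha
      have h1 : B ⁅t₀, (σ ^ a) x⁆ y = α ((σ⁻¹ ^ a) t₀) * B ((σ ^ a) x) y := by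
        rw [hgx a t₀ ht₀, LinearMap.map_smul₂, smul_eq_mul]
      have h2 : B ⁅t₀, (σ ^ a) x⁆ y = α t₀ * B ((σ ^ a) x) y := by
        rw [hBskew, hgy t₀ ht₀, map_smul, smul_eq_mul]
        ring
      have h3 : (α ((σ⁻¹ ^ a) t₀) - α t₀) * B ((σ ^ a) x) y = 0 := by
        rw [sub_mul, ← h1, ← h2, sub_self]
      rcases mul_eq_zero.mp h3 with h | h
      · exact absurd (sub_eq_zero.mp h) hne
      · exact h
    have hBsum : ∀ (v : L) (n : ℕ) (g : ℕ → F) (u : ℕ → L),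
        B (∑ a ∈ Finset.range n, g a • u a) v
          = ∑ a ∈ Finset.range n, g a * B (u a) v := by
      intro v n g u
      rw [map_sum, LinearMap.sum_apply]
      exact Finset.sum_congr rfl fun a _ => by
        rw [LinearMap.map_smul₂, smul_eq_mul]
    have hBsum2 : ∀ (u : L) (n : ℕ) (g : ℕ → F) (v : ℕ → L),
        B u (∑ b ∈ Finset.range n, g b • v b)
          = ∑ b ∈ Finset.range n, g b * B u (v b) := by
      intro u n g v
      rw [map_sum]
      exact Finset.sum_congr rfl fun b _ => by rw [map_smul, smul_eq_mul]
    have f1 : B (piJ σ m ζ j x) (piJ σ m ζ (-j) y)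
        = (m : F)⁻¹ * ((m : F)⁻¹ * ∑ b ∈ Finset.range m, ∑ a ∈ Finset.range m,
            (ζ ^ (-(j * (a : ℤ))) * ζ ^ (j * (b : ℤ))) * B ((σ ^ a) x) ((σ ^ b) y)) := by
      rw [hpiJ j x, hpiJ (-j) y, LinearMap.map_smul₂, map_smul,
        smul_eq_mul, smul_eq_mul]
      congr 1
      congr 1
      have g1 : ∀ a : ℕ, ζ ^ (-(j * (a : ℤ)))
            * B ((σ ^ a) x) (∑ b ∈ Finset.range m, ζ ^ (-((-j) * (b : ℤ))) • (σ ^ b) y)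
          = ∑ b ∈ Finset.range m,
              (ζ ^ (-(j * (a : ℤ))) * ζ ^ (j * (b : ℤ))) * B ((σ ^ a) x) ((σ ^ b) y) := by
        intro a
        rw [hBsum2, Finset.mul_sum]
        apply Finset.sum_congr rfl
        intro b _
        have h2 : -((-j) * (b : ℤ)) = j * (b : ℤ) := by ring
        rw [h2]; ring
      rw [hBsum, Finset.sum_congr rfl fun a _ => g1 a, Finset.sum_comm]
    have f2 : ∀ b ∈ Finset.range m,
        ∑ a ∈ Finset.range m,
          (ζ ^ (-(j * (a : ℤ))) * ζ ^ (j * (b : ℤ))) * B ((σ ^ a) x) ((σ ^ b) y)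
        = ∑ a ∈ Finset.range m, ζ ^ (-(j * (a : ℤ))) * B ((σ ^ a) x) y := by
      intro b _
      rw [aux_sum_shift m hm b
        (fun a => (ζ ^ (-(j * (a : ℤ))) * ζ ^ (j * (b : ℤ))) * B ((σ ^ a) x) ((σ ^ b) y))]
      apply Finset.sum_congr rfl
      intro a _
      rw [hscal a b, hpowmod (a + b)]
      have hs : (σ ^ (a + b)) x = (σ ^ b) ((σ ^ a) x) := by
        rw [add_comm a b, pow_add]; rfl
      rw [hs, hBpow]
    have f3 : ∑ a ∈ Finset.range m, ζ ^ (-(j * (a : ℤ))) * B ((σ ^ a) x) y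
        = B (xbar σ m ℓ ζ j x) y := by
      rw [← Finset.sum_filter_add_sum_filter_not (Finset.range m) (fun a => ℓ ∣ a)]
      have hzero : ∑ a ∈ (Finset.range m).filter (fun a => ¬ ℓ ∣ a),
          ζ ^ (-(j * (a : ℤ))) * B ((σ ^ a) x) y = 0 :=
        Finset.sum_eq_zero fun a ha => by
          rw [Finset.mem_filter] at ha
          rw [hBvanish a ha.2, mul_zero]
      rw [hzero, add_zero, aux_sum_div m ℓ hℓpos hℓdvd
        (fun a => ζ ^ (-(j * (a : ℤ))) * B ((σ ^ a) x) y)]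
      rw [xbar, hBsum]
      apply Finset.sum_congr rfl
      intro i _
      have hexp : -(j * ((i * ℓ : ℕ) : ℤ)) = -(j * (i : ℤ) * (ℓ : ℤ)) := by
        push_cast; ring
      rw [hexp]
    rw [f1, Finset.sum_congr rfl f2, Finset.sum_const, Finset.card_range,
      nsmul_eq_mul, f3, inv_mul_cancel_left₀ hm0]
end

section
/- Let α, β ∈ R belong to distinct σ-orbits with π(α) = π(β). Then for x ∈ g_α, y ∈ g_{-β}, and any j ∈ ℤ, one has [π_j(x), π_{-j}(y)] = 0. -/
open Finset

section MyAux

lemma mylie_sum {L : Type*} [LieRing L] {ι : Type*} (x : L) (s : Finset ι) (f : ι → L) :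
    ⁅x, ∑ i ∈ s, f i⁆ = ∑ i ∈ s, ⁅x, f i⁆ := by
  classical
  induction s using Finset.induction_on with
  | empty => simp
  | @insert a s ha ih => rw [Finset.sum_insert ha, Finset.sum_insert ha, lie_add, ih]

lemma mysum_lie {L : Type*} [LieRing L] {ι : Type*} (x : L) (s : Finset ι) (f : ι → L) :
    ⁅∑ i ∈ s, f i, x⁆ = ∑ i ∈ s, ⁅f i, x⁆ := by
  classical
  induction s using Finset.induction_on with
  | empty => simp
  | @insert a s ha ih => rw [Finset.sum_insert ha, Finset.sum_insert ha, add_lie, ih]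

lemma myavoid {F V ι : Type*} [Field F] [Infinite F] [AddCommGroup V] [Module F V]
    (T : Submodule F V) (s : Finset ι) (γ : ι → V →ₗ[F] F)
    (h : ∀ p ∈ s, ∃ t ∈ T, γ p t ≠ 0) :
    ∃ t ∈ T, ∀ p ∈ s, γ p t ≠ 0 := by
  classical
  revert h
  induction s using Finset.induction_on with
  | empty => exact fun _ => ⟨0, T.zero_mem, by simp⟩
  | @insert a s ha ih =>
    intro h
    obtain ⟨t, htT, ht⟩ := ih fun p hp => h p (Finset.mem_insert_of_mem hp)
    obtain ⟨u, huT, hu⟩ := h a (Finset.mem_insert_self _ _)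
    obtain ⟨c, hc⟩ := Infinite.exists_notMem_finset
      ((insert a s).image fun p => -(γ p t) / (γ p u))
    refine ⟨t + c • u, T.add_mem htT (T.smul_mem c huT), ?_⟩
    intro p hp h0
    simp only [map_add, map_smul, smul_eq_mul] at h0
    by_cases hpu : γ p u = 0
    · rw [hpu, mul_zero, add_zero] at h0
      rcases Finset.mem_insert.mp hp with rfl | hps
      · exact hu hpu
      · exact ht p hps h0
    · apply hc
      refine Finset.mem_image.mpr ⟨p, hp, ?_⟩
      rw [div_eq_iff hpu]
      linear_combination -h0

lemma myeigen {F L ι : Type*} [Field F] [AddCommGroup L] [Module F L]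
    (N : L →ₗ[F] L) (c : ι → F) (s : Finset ι) :
    ∀ (w : ι → L) (v : L), (∀ p ∈ s, c p ≠ 0) →
      (∀ p ∈ s, N (w p) = c p • w p) → N v = 0 →
      (∑ p ∈ s, w p) = v → v = 0 := by
  classical
  induction s using Finset.induction_on with
  | empty => intro w v _ _ _ hsum; simpa using hsum.symm
  | @insert a s ha ih =>
    intro w v hc hw hv hsum
    have hca : c a ≠ 0 := hc a (Finset.mem_insert_self _ _)
    have hs : (∑ p ∈ s, w p) = v - w a := by
      rw [Finset.sum_insert ha] at hsum
      rw [← hsum]; abel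
    have hNs : N (∑ p ∈ s, w p) = ∑ p ∈ s, c p • w p := by
      rw [map_sum]
      exact Finset.sum_congr rfl fun p hp => hw p (Finset.mem_insert_of_mem hp)
    have h1 : (∑ p ∈ s, (c p - c a) • w p) = (-(c a)) • v := by
      have e1 : (∑ p ∈ s, (c p - c a) • w p)
          = (∑ p ∈ s, c p • w p) - c a • (∑ p ∈ s, w p) := by
        rw [Finset.smul_sum, ← Finset.sum_sub_distrib]
        exact Finset.sum_congr rfl fun p _ => sub_smul _ _ _
      rw [e1, ← hNs, hs, map_sub, hv, hw a (Finset.mem_insert_self _ _),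
        smul_sub]
      module
    have h2 := ih (fun p => (c p - c a) • w p) ((-(c a)) • v)
      (fun p hp => hc p (Finset.mem_insert_of_mem hp))
      (fun p hp => by
        rw [map_smul, hw p (Finset.mem_insert_of_mem hp), smul_comm])
      (by rw [map_smul, hv, smul_zero]) h1
    rcases smul_eq_zero.mp h2 with h | h
    · exact absurd (neg_eq_zero.mp h) hca
    · exact h

end MyAux


/-- if `α`, `β` are roots in distinct `σ`-orbits with
`π(α) = π(β)` then `[π_j(x), π_{-j}(y)] = 0` for `x ∈ g_α`, `y ∈ g_{-β}`. -/
theorem stmt11 {F L : Type*} [Field F] [CharZero F] [LieRing L] [LieAlgebra F L]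
    (T : LieSubalgebra F L) (R : Set (L →ₗ[F] F))
    (B : LinearMap.BilinForm F L)
    (htoral : IsToralPair F L T R) (hIA1 : IsInvForm F L B T)
    (hIA2 : IA2 F L T R)
    (m : ℕ) (hm : 0 < m) (ζ : F) (hζ : IsPrimitiveRoot ζ m)
    (σ : L ≃ₗ[F] L) (hσLie : ∀ x y : L, σ ⁅x, y⁆ = ⁅σ x, σ y⁆)
    (hσm : σ ^ m = 1) (hσT : ∀ t ∈ T, σ t ∈ T)
    (hσB : ∀ x y : L, B (σ x) (σ y) = B x y)
    (hA4 : A4Cond T σ)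
    (α β : L →ₗ[F] F) (hα : α ∈ R) (hβ : β ∈ R)
    (horb : ∀ i : ℕ, ∃ t ∈ T, α ((σ⁻¹ ^ i) t) ≠ β t)
    (hπ : ∀ t ∈ T, σ t = t → α t = β t)
    (x y : L) (hx : x ∈ gSpace F L T α) (hy : y ∈ gSpace F L T (-β)) (j : ℤ) :
    ⁅piJ σ m ζ j x, piJ σ m ζ (-j) y⁆ = 0 := by
  classical
  have hζm : ζ ^ m = 1 := hζ.pow_eq_one
  have hζ0 : ζ ≠ 0 := by
    intro h; rw [h, zero_pow hm.ne'] at hζm; exact zero_ne_one hζm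
  have hx' : ∀ t ∈ T, ⁅t, x⁆ = α t • x := hx
  have hy' : ∀ t ∈ T, ⁅t, y⁆ = (-β) t • y := hy
  have hT : ∀ (n : ℕ), ∀ t ∈ T, (σ ^ n) t ∈ T := by
    intro n
    induction n with
    | zero => intro t ht; rw [pow_zero]; exact ht
    | succ n ih =>
      intro t ht
      have h1 : (σ ^ (n+1)) t = (σ ^ n) (σ t) := by rw [pow_succ]; rfl
      rw [h1]; exact ih _ (hσT t ht)
  have hm1 : m - 1 + 1 = m := Nat.succ_pred_eq_of_pos hm
  have hinv : σ⁻¹ = σ ^ (m - 1) := by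
    apply inv_eq_of_mul_eq_one_right
    rw [← pow_succ', hm1, hσm]
  have hTinv : ∀ (n : ℕ), ∀ t ∈ T, (σ⁻¹ ^ n) t ∈ T := by
    intro n t ht
    rw [hinv, ← pow_mul]
    exact hT _ t ht
  have hpowLie : ∀ (n : ℕ) (u v : L), (σ ^ n) ⁅u, v⁆ = ⁅(σ ^ n) u, (σ ^ n) v⁆ := by
    intro n
    induction n with
    | zero => intro u v; rw [pow_zero]; rfl
    | succ n ih =>
      intro u v
      have h1 : ∀ w : L, (σ ^ (n+1)) w = (σ ^ n) (σ w) := fun w => by rw [pow_succ]; rfl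
      rw [h1, h1, h1, hσLie, ih]
  have hfixpow : ∀ (n : ℕ) (t : L), σ t = t → (σ ^ n) t = t := by
    intro n t ht
    induction n with
    | zero => rw [pow_zero]; rfl
    | succ n ih =>
      calc (σ ^ (n+1)) t = (σ ^ n) (σ t) := by rw [pow_succ]; rfl
        _ = (σ ^ n) t := by rw [ht]
        _ = t := ih
  have hfixinvpow : ∀ (n : ℕ) (t : L), σ t = t → (σ⁻¹ ^ n) t = t := by
    intro n t ht; rw [hinv, ← pow_mul]; exact hfixpow _ t ht
  have hpowinv_cancel : ∀ (i : ℕ) (u : L), (σ ^ i) ((σ⁻¹ ^ i) u) = u := by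
    intro i u
    have h1 : (σ ^ i) * (σ⁻¹ ^ i) = 1 := by
      rw [inv_pow, mul_inv_cancel]
    calc (σ ^ i) ((σ⁻¹ ^ i) u) = ((σ ^ i) * (σ⁻¹ ^ i)) u := rfl
      _ = u := by rw [h1]; rfl
  have hxg : ∀ (i : ℕ), ∀ t ∈ T, ⁅t, (σ ^ i) x⁆ = α ((σ⁻¹ ^ i) t) • (σ ^ i) x := by
    intro i t ht
    conv_lhs => rw [← hpowinv_cancel i t]
    rw [← hpowLie, hx' _ (hTinv i t ht), map_smul]
  have hyg : ∀ (k : ℕ), ∀ t ∈ T, ⁅t, (σ ^ k) y⁆ = -(β ((σ⁻¹ ^ k) t)) • (σ ^ k) y := by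
    intro k t ht
    conv_lhs => rw [← hpowinv_cancel k t]
    rw [← hpowLie, hy' _ (hTinv k t ht), map_smul, LinearMap.neg_apply]
  have hpiJ : ∀ (j' : ℤ) (u : L),
      piJ σ m ζ j' u = (m : F)⁻¹ • ∑ i ∈ Finset.range m, ζ ^ (-(j' * (i:ℤ))) • (σ ^ i) u := by
    intro j' u
    simp [piJ, LinearMap.sum_apply, LinearMap.smul_apply, LinearEquiv.coe_coe]
  have hsigpi : ∀ (j' : ℤ) (u : L), σ (piJ σ m ζ j' u) = ζ ^ j' • piJ σ m ζ j' u := by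
    intro j' u
    set G : ℕ → L := fun i => ζ ^ (-(j' * (i:ℤ))) • (σ ^ i) u with hG
    have key : ∀ i : ℕ, σ (G i) = ζ ^ j' • G (i+1) := by
      intro i
      show σ (ζ ^ (-(j' * (i:ℤ))) • (σ ^ i) u)
        = ζ ^ j' • (ζ ^ (-(j' * ((i+1 : ℕ):ℤ))) • (σ ^ (i+1)) u)
      rw [map_smul, smul_smul, ← zpow_add₀ hζ0]
      congr 1
      · congr 1
        push_cast; ring
      · rw [pow_succ']; rfl
    have hGm : G m = u := by
      show ζ ^ (-(j' * (m:ℤ))) • (σ ^ m) u = u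
      rw [hσm, show -(j' * (m:ℤ)) = (m:ℤ) * (-j') by ring, zpow_mul, zpow_natCast,
        hζm, one_zpow, one_smul]
      rfl
    have hG0 : G 0 = u := by
      show ζ ^ (-(j' * ((0:ℕ):ℤ))) • (σ ^ 0) u = u
      rw [Nat.cast_zero, mul_zero, neg_zero, zpow_zero, one_smul, pow_zero]
      rfl
    have hshift : (∑ i ∈ Finset.range m, G (i + 1)) = ∑ i ∈ Finset.range m, G i := by
      have h1 := Finset.sum_range_succ' G m
      have h2 := Finset.sum_range_succ G m
      have h3 : (∑ i ∈ Finset.range m, G (i + 1)) + G 0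
          = (∑ i ∈ Finset.range m, G i) + G m := by rw [← h1, h2]
      rw [hGm, hG0] at h3
      exact add_right_cancel h3
    calc σ (piJ σ m ζ j' u) = (m:F)⁻¹ • ∑ i ∈ Finset.range m, σ (G i) := by
          rw [hpiJ, map_smul, map_sum]
      _ = (m:F)⁻¹ • ∑ i ∈ Finset.range m, ζ ^ j' • G (i+1) := by
          rw [Finset.sum_congr rfl fun i _ => key i]
      _ = ζ ^ j' • ((m:F)⁻¹ • ∑ i ∈ Finset.range m, G i) := by
          rw [← Finset.smul_sum, hshift, smul_comm ((m:F)⁻¹) (ζ ^ j')]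
      _ = ζ ^ j' • piJ σ m ζ j' u := by rw [hpiJ]
  set z := ⁅piJ σ m ζ j x, piJ σ m ζ (-j) y⁆ with hzdef
  have hσz : σ z = z := by
    rw [hzdef, hσLie, hsigpi, hsigpi, smul_lie, lie_smul, smul_smul, ← zpow_add₀ hζ0,
      add_neg_cancel, zpow_zero, one_smul]
  have hfixz : ∀ t ∈ T, σ t = t → ⁅t, z⁆ = 0 := by
    intro t ht htfix
    have hxfix : ⁅t, piJ σ m ζ j x⁆ = α t • piJ σ m ζ j x := by
      have hterm : ∀ i ∈ Finset.range m, ⁅t, ζ ^ (-(j * (i:ℤ))) • (σ ^ i) x⁆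
          = α t • (ζ ^ (-(j * (i:ℤ))) • (σ ^ i) x) := by
        intro i _
        rw [lie_smul, hxg i t ht, hfixinvpow i t htfix, smul_comm]
      calc ⁅t, piJ σ m ζ j x⁆
          = (m:F)⁻¹ • ∑ i ∈ Finset.range m, ⁅t, ζ ^ (-(j * (i:ℤ))) • (σ ^ i) x⁆ := by
            rw [hpiJ, lie_smul, mylie_sum]
        _ = (m:F)⁻¹ • ∑ i ∈ Finset.range m, α t • (ζ ^ (-(j * (i:ℤ))) • (σ ^ i) x) := by
            rw [Finset.sum_congr rfl hterm]
        _ = α t • piJ σ m ζ j x := by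
            rw [← Finset.smul_sum, smul_comm ((m:F)⁻¹) (α t), hpiJ]
    have hyfix : ⁅t, piJ σ m ζ (-j) y⁆ = -(β t) • piJ σ m ζ (-j) y := by
      have hterm : ∀ k ∈ Finset.range m, ⁅t, ζ ^ (-((-j) * (k:ℤ))) • (σ ^ k) y⁆
          = -(β t) • (ζ ^ (-((-j) * (k:ℤ))) • (σ ^ k) y) := by
        intro k _
        rw [lie_smul, hyg k t ht, hfixinvpow k t htfix, smul_comm]
      calc ⁅t, piJ σ m ζ (-j) y⁆
          = (m:F)⁻¹ • ∑ k ∈ Finset.range m, ⁅t, ζ ^ (-((-j) * (k:ℤ))) • (σ ^ k) y⁆ := by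
            rw [hpiJ, lie_smul, mylie_sum]
        _ = (m:F)⁻¹ • ∑ k ∈ Finset.range m, -(β t) • (ζ ^ (-((-j) * (k:ℤ))) • (σ ^ k) y) := by
            rw [Finset.sum_congr rfl hterm]
        _ = -(β t) • piJ σ m ζ (-j) y := by
            rw [← Finset.smul_sum, smul_comm ((m:F)⁻¹) (-(β t)), hpiJ]
    rw [hzdef, leibniz_lie, hxfix, hyfix, smul_lie, lie_smul, hπ t ht htfix]
    module
  have hz0 : ∀ t ∈ T, ⁅t, z⁆ = 0 := hA4 z hσz hfixz
  set γ : ℕ × ℕ → (L →ₗ[F] F) := fun p =>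
    α ∘ₗ ((σ⁻¹ ^ p.1 : L ≃ₗ[F] L) : L →ₗ[F] L)
      - β ∘ₗ ((σ⁻¹ ^ p.2 : L ≃ₗ[F] L) : L →ₗ[F] L) with hγdef
  have hγapp : ∀ (i k : ℕ) (t : L), γ (i, k) t = α ((σ⁻¹ ^ i) t) - β ((σ⁻¹ ^ k) t) := by
    intro i k t
    rw [hγdef]
    simp [LinearMap.sub_apply, LinearMap.comp_apply, LinearEquiv.coe_coe]
  have hnz : ∀ p ∈ Finset.range m ×ˢ Finset.range m, ∃ t ∈ T.toSubmodule, γ p t ≠ 0 := by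
    rintro ⟨i, k⟩ hp
    obtain ⟨hi, hk⟩ := Finset.mem_product.mp hp
    have hkm : k ≤ m := (Finset.mem_range.mp hk).le
    obtain ⟨s₀, hs₀T, hs₀⟩ := horb (i + (m - k))
    refine ⟨(σ ^ k) s₀, hT k s₀ hs₀T, ?_⟩
    have e1 : (σ⁻¹ ^ k) ((σ ^ k) s₀) = s₀ := by
      calc (σ⁻¹ ^ k) ((σ ^ k) s₀) = ((σ⁻¹ ^ k) * (σ ^ k)) s₀ := rfl
        _ = s₀ := by rw [inv_pow, inv_mul_cancel]; rfl
    have e2 : (σ⁻¹ ^ i) ((σ ^ k) s₀) = (σ⁻¹ ^ (i + (m - k))) s₀ := by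
      have h4 : (σ⁻¹ ^ (i + (m - k))) = (σ⁻¹ ^ i) * (σ ^ k) := by
        rw [pow_add]
        congr 1
        rw [inv_pow]
        apply inv_eq_of_mul_eq_one_left
        rw [← pow_add, Nat.add_sub_cancel' hkm, hσm]
      calc (σ⁻¹ ^ i) ((σ ^ k) s₀) = ((σ⁻¹ ^ i) * (σ ^ k)) s₀ := rfl
        _ = (σ⁻¹ ^ (i + (m - k))) s₀ := by rw [h4]
    intro h0
    rw [hγapp, e1, e2] at h0
    exact hs₀ (sub_eq_zero.mp h0)
  obtain ⟨t0, ht0T, ht0⟩ := myavoid (T.toSubmodule) (Finset.range m ×ˢ Finset.range m) γ hnz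
  have ht0T' : t0 ∈ T := ht0T
  have hbr : ∀ (i k : ℕ), ∀ t ∈ T, ⁅t, ⁅(σ ^ i) x, (σ ^ k) y⁆⁆
      = (α ((σ⁻¹ ^ i) t) - β ((σ⁻¹ ^ k) t)) • ⁅(σ ^ i) x, (σ ^ k) y⁆ := by
    intro i k t ht
    rw [leibniz_lie, hxg i t ht, hyg k t ht, smul_lie, lie_smul, sub_smul]
    module
  set w : ℕ × ℕ → L := fun p =>
    (m:F)⁻¹ • ((m:F)⁻¹ • (ζ ^ (-(j * (p.1:ℤ))) •
      (ζ ^ (-((-j) * (p.2:ℤ))) • ⁅(σ ^ p.1) x, (σ ^ p.2) y⁆))) with hwdef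
  have hweig : ∀ p ∈ Finset.range m ×ˢ Finset.range m,
      (LieAlgebra.ad F L t0) (w p) = γ p t0 • w p := by
    rintro ⟨i, k⟩ _
    rw [LieAlgebra.ad_apply, hwdef, hγapp]
    simp only
    rw [lie_smul, lie_smul, lie_smul, lie_smul, hbr i k t0 ht0T']
    module
  have hveig : (LieAlgebra.ad F L t0) z = 0 := by
    rw [LieAlgebra.ad_apply]
    exact hz0 t0 ht0T'
  have hsum : (∑ p ∈ Finset.range m ×ˢ Finset.range m, w p) = z := by
    rw [hzdef, hpiJ, hpiJ, hwdef]
    rw [Finset.sum_product]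
    simp only [smul_lie, mylie_sum, mysum_lie, lie_smul, Finset.smul_sum]
    rw [Finset.sum_comm]
    refine Finset.sum_congr rfl fun k _ => Finset.sum_congr rfl fun i _ => ?_
    module
  exact myeigen (LieAlgebra.ad F L t0) (fun p => γ p t0)
    (Finset.range m ×ˢ Finset.range m) w z ht0 hweig hveig hsum
end

section
/- Let (g,T) be a division IARA with root system R and σ an automorphism satisfying (A1)–(A4). If α ∈ R with π(α) ≠ 0, x ∈ g_α, j ∈ ℤ, and π_j(x) ≠ 0, then there exists y ∈ g_{-α} such that 0 ≠ [π_j(x), π_{-j}(y)] ∈ T^0. -/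
open Finset

section Stmt13Aux

lemma sum_shift13 {M : Type*} [AddCommGroup M] (m : ℕ) (f : ℕ → M) (hf : f m = f 0) :
    ∑ i ∈ range m, f (i + 1) = ∑ i ∈ range m, f i := by
  have h1 := Finset.sum_range_succ' f m
  rw [Finset.sum_range_succ f m, hf] at h1
  exact (add_right_cancel h1).symm

lemma sum_grid13 {M : Type*} [AddCommMonoid M] (l q : ℕ) (hl : 0 < l) (f : ℕ → M) :
    ∑ i ∈ range (l * q), f i = ∑ r ∈ range l, ∑ k ∈ range q, f (r + k * l) := by
  rw [← Finset.sum_product']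
  refine Finset.sum_nbij' (fun n => (n % l, n / l)) (fun p => p.1 + p.2 * l) ?_ ?_ ?_ ?_ ?_
  · intro n hn
    simp only [mem_range] at hn
    simp only [mem_product, mem_range]
    exact ⟨Nat.mod_lt _ hl, Nat.div_lt_of_lt_mul (by omega)⟩
  · intro p hp
    simp only [mem_product, mem_range] at hp
    simp only [mem_range]
    calc p.1 + p.2 * l < l + p.2 * l := by omega
    _ = (p.2 + 1) * l := by ring
    _ ≤ q * l := Nat.mul_le_mul_right _ (by omega)
    _ = l * q := Nat.mul_comm _ _
  · intro n _
    exact Nat.mod_add_div' n l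
  · intro p hp
    simp only [mem_product, mem_range] at hp
    have h1 : (p.1 + p.2 * l) % l = p.1 := by
      rw [Nat.add_mul_mod_self_right]; exact Nat.mod_eq_of_lt hp.1
    have h2 : (p.1 + p.2 * l) / l = p.2 := by
      rw [Nat.add_mul_div_right _ _ hl, Nat.div_eq_of_lt hp.1]; omega
    simp [h1, h2]
  · intro n _
    congr 1
    exact (Nat.mod_add_div' n l).symm

lemma geom_shift13 {F M : Type*} [Field F] [AddCommGroup M] [Module F M] {ζ : F} (hζ0 : ζ ≠ 0)
    (n : ℕ) (c : ℤ) (hper : ζ ^ ((n : ℤ) * c) = 1) (v : ℕ → M) (hvn : v n = v 0) :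
    ∑ i ∈ range n, ζ ^ ((i : ℤ) * c) • v (i + 1)
      = ζ ^ (-c) • ∑ i ∈ range n, ζ ^ ((i : ℤ) * c) • v i := by
  have h1 : ∑ i ∈ range n, ζ ^ ((i : ℤ) * c) • v (i + 1)
      = ∑ i ∈ range n, (fun k : ℕ => ζ ^ (((k : ℤ) - 1) * c) • v k) (i + 1) := by
    refine Finset.sum_congr rfl fun i _ => ?_
    simp only
    congr 1
    push_cast
    ring_nf
  have h2 := sum_shift13 n (fun k : ℕ => ζ ^ (((k : ℤ) - 1) * c) • v k) (by
    rw [hvn]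
    congr 1
    rw [sub_mul, zpow_sub₀ hζ0, hper]
    norm_num)
  rw [h1, h2, Finset.smul_sum]
  refine Finset.sum_congr rfl fun i _ => ?_
  rw [smul_smul, ← zpow_add₀ hζ0]
  congr 1
  ring

lemma sep_aux13 {F L : Type*} [Field F] [LieRing L] [LieAlgebra F L]
    (T : LieSubalgebra F L) {ι : Type*} (S : Finset ι) :
    ∀ (w : ι → L) (u : L), (∀ t ∈ T, ⁅t, u⁆ = 0) →
    (∀ i ∈ S, ∃ γ : L →ₗ[F] F, (∀ t ∈ T, ⁅t, w i⁆ = γ t • w i) ∧ ∃ t ∈ T, γ t ≠ 0) →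
    u = ∑ i ∈ S, w i → u = 0 := by
  classical
  induction S using Finset.induction_on with
  | empty => intro w u _ _ h; simpa using h
  | insert a S₀ ha ih =>
    intro w u hu hw heq
    obtain ⟨γ, hγ, t, htT, htγ⟩ := hw a (Finset.mem_insert_self a S₀)
    set lam := γ t with hlam
    have hlie : ⁅t, u⁆ = ∑ i ∈ insert a S₀, ⁅t, w i⁆ := by
      rw [heq]
      exact map_sum (LieAlgebra.ad F L t) w _
    have key : lam • u = ∑ i ∈ S₀, (lam • w i - ⁅t, w i⁆) := by
      have h1 : ∑ i ∈ insert a S₀, (lam • w i - ⁅t, w i⁆)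
          = lam • u - ⁅t, u⁆ := by
        rw [Finset.sum_sub_distrib, ← Finset.smul_sum, ← heq, ← hlie]
      rw [Finset.sum_insert ha] at h1
      have h2 : lam • w a - ⁅t, w a⁆ = 0 := by
        rw [hγ t htT]; simp [hlam]
      rw [h2, zero_add] at h1
      rw [h1, hu t htT, sub_zero]
    have hz : lam • u = 0 := by
      refine ih (fun i => lam • w i - ⁅t, w i⁆) (lam • u) ?_ ?_ key
      · intro s hsT; rw [lie_smul, hu s hsT, smul_zero]
      · intro i hi
        obtain ⟨γ', hγ', t', ht'T, ht'γ⟩ := hw i (Finset.mem_insert_of_mem hi)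
        refine ⟨γ', fun s hsT => ?_, t', ht'T, ht'γ⟩
        have hrw : lam • w i - ⁅t, w i⁆ = (lam - γ' t) • w i := by
          rw [hγ' t htT, sub_smul]
        show ⁅s, lam • w i - ⁅t, w i⁆⁆ = γ' s • (lam • w i - ⁅t, w i⁆)
        rw [hrw, lie_smul, hγ' s hsT, smul_comm]
    rcases smul_eq_zero.mp hz with h | h
    · exact absurd h htγ
    · exact h

end Stmt13Aux

/-- in a division IARA, if `π(α) ≠ 0`, `x ∈ g_α` and
`π_j(x) ≠ 0`, then there is `y ∈ g_{-α}` with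
`0 ≠ [π_j(x), π_{-j}(y)] ∈ T⁰`. -/
theorem stmt13 {F L : Type*} [Field F] [CharZero F] [LieRing L] [LieAlgebra F L]
    (T : LieSubalgebra F L) (R : Set (L →ₗ[F] F))
    (B : LinearMap.BilinForm F L)
    (hIARA : IsDivIARA F L B T R)
    (m : ℕ) (hm : 0 < m) (ζ : F) (hζ : IsPrimitiveRoot ζ m)
    (σ : L ≃ₗ[F] L) (hσLie : ∀ x y : L, σ ⁅x, y⁆ = ⁅σ x, σ y⁆)
    (hσm : σ ^ m = 1) (hσT : ∀ t ∈ T, σ t ∈ T)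
    (hσB : ∀ x y : L, B (σ x) (σ y) = B x y)
    (hA4 : A4Cond T σ)
    (α : L →ₗ[F] F) (hα : α ∈ R)
    (hπα : ∃ t ∈ T, σ t = t ∧ α t ≠ 0)
    (x : L) (hx : x ∈ gSpace F L T α) (j : ℤ)
    (hπj : piJ σ m ζ j x ≠ 0) :
    ∃ y ∈ gSpace F L T (-α),
      ⁅piJ σ m ζ j x, piJ σ m ζ (-j) y⁆ ≠ 0 ∧
      ⁅piJ σ m ζ j x, piJ σ m ζ (-j) y⁆ ∈ T ∧
      σ ⁅piJ σ m ζ j x, piJ σ m ζ (-j) y⁆ = ⁅piJ σ m ζ j x, piJ σ m ζ (-j) y⁆ := by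
  classical
  obtain ⟨t₀, ht₀T, ht₀σ, ht₀α⟩ := hπα
  have hζ1 : ζ ^ m = 1 := hζ.pow_eq_one
  have hζ0 : ζ ≠ 0 := hζ.ne_zero hm.ne'
  have hmF : (m : F) ≠ 0 := Nat.cast_ne_zero.mpr hm.ne'
  have hZm : ∀ k : ℤ, ζ ^ ((m : ℤ) * k) = 1 := by
    intro k
    rw [zpow_mul, zpow_natCast, hζ1, one_zpow]
  have hzcongr : ∀ (a b : ℤ) (u v : L), a = b → u = v → ζ ^ a • u = ζ ^ b • v := by
    intro a b u v h1 h2; rw [h1, h2]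
  -- basic facts about powers of σ
  have hmul_apply : ∀ (a b : ℕ) (z : L), (σ ^ (a + b)) z = (σ ^ a) ((σ ^ b) z) := by
    intro a b z
    rw [pow_add]
    rfl
  have hσmz : ∀ z : L, (σ ^ m) z = z := by
    intro z; rw [hσm]; rfl
  have hone : ∀ (a : ℕ) (z : L), (σ ^ (1 + a)) z = σ ((σ ^ a) z) := by
    intro a z; rw [hmul_apply 1 a, pow_one]
  have hpow_lie : ∀ (i : ℕ) (z w : L), (σ ^ i) ⁅z, w⁆ = ⁅(σ ^ i) z, (σ ^ i) w⁆ := by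
    intro i
    induction i with
    | zero => intro z w; rfl
    | succ k ihk =>
      intro z w
      rw [show k + 1 = 1 + k from by omega, hone, hone, hone, ihk, hσLie]
  have hpowT : ∀ (i : ℕ), ∀ t ∈ T, (σ ^ i) t ∈ T := by
    intro i
    induction i with
    | zero => intro t ht; exact ht
    | succ k ihk =>
      intro t ht
      rw [show k + 1 = 1 + k from by omega, hone]
      exact hσT _ (ihk t ht)
  have hpowB : ∀ (i : ℕ) (z w : L), B ((σ ^ i) z) ((σ ^ i) w) = B z w := by
    intro i
    induction i with
    | zero => intro z w; rfl
    | succ k ihk =>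
      intro z w
      rw [show k + 1 = 1 + k from by omega, hone, hone, hσB, ihk]
  have hfixpow : ∀ t : L, σ t = t → ∀ i : ℕ, (σ ^ i) t = t := by
    intro t htσ i
    induction i with
    | zero => rfl
    | succ k ihk =>
      rw [show k + 1 = 1 + k from by omega, hone, ihk, htσ]
  -- sums of brackets
  have lie_sum' : ∀ (t : L) (S : Finset ℕ) (g : ℕ → L),
      ⁅t, ∑ i ∈ S, g i⁆ = ∑ i ∈ S, ⁅t, g i⁆ := by
    intro t S g
    exact map_sum (LieAlgebra.ad F L t) g S
  have sum_lie' : ∀ (t : L) (S : Finset ℕ) (g : ℕ → L),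
      ⁅∑ i ∈ S, g i, t⁆ = ∑ i ∈ S, ⁅g i, t⁆ := by
    intro t S g
    rw [← lie_skew, lie_sum' t S g, ← Finset.sum_neg_distrib]
    exact Finset.sum_congr rfl fun i _ => (lie_skew _ _)
  -- expansion of piJ
  have hpiJ : ∀ (j' : ℤ) (z : L), piJ σ m ζ j' z
      = (m : F)⁻¹ • ∑ i ∈ range m, ζ ^ (-(j' * (i : ℤ))) • (σ ^ i) z := by
    intro j' z
    simp [piJ, LinearMap.sum_apply, LinearMap.smul_apply, LinearEquiv.coe_coe]
  -- eigenvector property of piJ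
  have heig : ∀ (j' : ℤ) (z : L), σ (piJ σ m ζ j' z) = ζ ^ j' • piJ σ m ζ j' z := by
    intro j' z
    rw [hpiJ, map_smul, map_sum, smul_comm (ζ ^ j') ((m : F)⁻¹)]
    congr 1
    have h1 : ∀ i ∈ range m, σ (ζ ^ (-(j' * (i : ℤ))) • (σ ^ i) z)
        = ζ ^ ((i : ℤ) * (-j')) • (fun k : ℕ => (σ ^ k) z) (i + 1) := by
      intro i _
      rw [map_smul]
      refine hzcongr _ _ _ _ (by ring) ?_
      simp only
      rw [show i + 1 = 1 + i from by omega, hone]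
    rw [Finset.sum_congr rfl h1,
      geom_shift13 hζ0 m (-j') (by rw [show (m : ℤ) * (-j') = (m : ℤ) * (-j') from rfl]; exact hZm (-j'))
        (fun k : ℕ => (σ ^ k) z) (hσmz z), neg_neg]
    congr 1
    exact Finset.sum_congr rfl fun i _ => hzcongr _ _ _ _ (by ring) rfl
  -- bracket with σ-fixed toral elements
  have hbrfix : ∀ t : L, σ t = t → ∀ (i : ℕ) (z : L), ⁅t, (σ ^ i) z⁆ = (σ ^ i) ⁅t, z⁆ := by
    intro t htσ i z
    conv_lhs => rw [← hfixpow t htσ i]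
    rw [← hpow_lie]
  have hfix : ∀ t, t ∈ T → σ t = t → ∀ (β : L →ₗ[F] F) (z : L), (∀ s ∈ T, ⁅s, z⁆ = β s • z) →
      ∀ j' : ℤ, ⁅t, piJ σ m ζ j' z⁆ = β t • piJ σ m ζ j' z := by
    intro t htT htσ β z hz j'
    rw [hpiJ, lie_smul, lie_sum' t _ _, smul_comm (β t) ((m : F)⁻¹)]
    congr 1
    rw [Finset.smul_sum]
    refine Finset.sum_congr rfl fun i _ => ?_
    rw [lie_smul, hbrfix t htσ i z, hz t htT, map_smul, smul_comm]
  -- the period ℓ of α under σ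
  have hPm : ∀ t ∈ T, α ((σ ^ m) t) = α t := fun t _ => by rw [hσmz]
  have hex : ∃ d : ℕ, 0 < d ∧ ∀ t ∈ T, α ((σ ^ d) t) = α t := ⟨m, hm, hPm⟩
  have hℓpos : 0 < Nat.find hex := (Nat.find_spec hex).1
  have hPℓ : ∀ t ∈ T, α ((σ ^ Nat.find hex) t) = α t := (Nat.find_spec hex).2
  have hℓle : Nat.find hex ≤ m := Nat.find_le ⟨hm, hPm⟩
  have hℓmin : ∀ d : ℕ, 0 < d → d < Nat.find hex → ∃ t ∈ T, α ((σ ^ d) t) ≠ α t := by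
    intro d hd hdl
    have h := Nat.find_min hex hdl
    push_neg at h
    exact h hd
  set ℓ := Nat.find hex with hℓdef
  have hPmul : ∀ k : ℕ, ∀ t ∈ T, α ((σ ^ (k * ℓ)) t) = α t := by
    intro k
    induction k with
    | zero => intro t ht; rw [zero_mul, pow_zero]; rfl
    | succ k ihk =>
      intro t ht
      rw [show (k + 1) * ℓ = k * ℓ + ℓ from by ring, hmul_apply (k * ℓ) ℓ t]
      exact (ihk _ (hpowT ℓ t ht)).trans (hPℓ t ht)
  have hdvd : ℓ ∣ m := by
    rcases Nat.eq_zero_or_pos (m % ℓ) with h0 | hpos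
    · exact Nat.dvd_of_mod_eq_zero h0
    · exfalso
      obtain ⟨t, ht, hne⟩ := hℓmin (m % ℓ) hpos (Nat.mod_lt m hℓpos)
      apply hne
      have e1 : (σ ^ m) t = (σ ^ (m / ℓ * ℓ)) ((σ ^ (m % ℓ)) t) := by
        rw [← hmul_apply]
        congr 2
        exact (Nat.div_add_mod' m ℓ).symm
      have e2 : α ((σ ^ (m / ℓ * ℓ)) ((σ ^ (m % ℓ)) t)) = α t := by
        rw [← e1, hσmz]
      exact ((hPmul (m / ℓ) _ (hpowT _ t ht)).symm).trans e2
  set q := m / ℓ with hqdef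
  have hlq : ℓ * q = m := Nat.mul_div_cancel' hdvd
  have hq0 : 0 < q := by
    rcases Nat.eq_zero_or_pos q with h0 | h
    · rw [h0, Nat.mul_zero] at hlq; omega
    · exact h
  have hℓF : (ℓ : F) ≠ 0 := Nat.cast_ne_zero.mpr hℓpos.ne'
  have hqF : (q : F) ≠ 0 := Nat.cast_ne_zero.mpr hq0.ne'
  -- shifting root vectors by σ^(k*ℓ)
  have hstep : ∀ (β : L →ₗ[F] F), (∀ t ∈ T, β ((σ ^ ℓ) t) = β t) →
      ∀ z : L, (∀ s ∈ T, ⁅s, z⁆ = β s • z) → ∀ s ∈ T, ⁅s, (σ ^ ℓ) z⁆ = β s • (σ ^ ℓ) z := by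
    intro β hβ z hz s hsT
    have huT : (σ ^ (m - ℓ)) s ∈ T := hpowT _ s hsT
    have hsu : (σ ^ ℓ) ((σ ^ (m - ℓ)) s) = s := by
      rw [← hmul_apply ℓ (m - ℓ) s, show ℓ + (m - ℓ) = m from by omega, hσmz]
    calc ⁅s, (σ ^ ℓ) z⁆ = (σ ^ ℓ) ⁅(σ ^ (m - ℓ)) s, z⁆ := by
          conv_lhs => rw [← hsu]
          rw [← hpow_lie]
    _ = (σ ^ ℓ) (β ((σ ^ (m - ℓ)) s) • z) := by rw [hz _ huT]
    _ = β ((σ ^ (m - ℓ)) s) • (σ ^ ℓ) z := map_smul _ _ _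
    _ = β s • (σ ^ ℓ) z := by rw [← hβ _ huT, hsu]
  have hiter : ∀ (β : L →ₗ[F] F), (∀ t ∈ T, β ((σ ^ ℓ) t) = β t) →
      ∀ z : L, (∀ s ∈ T, ⁅s, z⁆ = β s • z) →
      ∀ k : ℕ, ∀ s ∈ T, ⁅s, (σ ^ (k * ℓ)) z⁆ = β s • (σ ^ (k * ℓ)) z := by
    intro β hβ z hz k
    induction k with
    | zero =>
      intro s hs
      rw [zero_mul, pow_zero]
      exact hz s hs
    | succ k ihk =>
      intro s hs
      rw [show (k + 1) * ℓ = ℓ + k * ℓ from by ring, hmul_apply ℓ (k * ℓ) z]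
      exact hstep β hβ ((σ ^ (k * ℓ)) z) ihk s hs
  have hPℓneg : ∀ t ∈ T, (-α) ((σ ^ ℓ) t) = (-α) t := by
    intro t ht
    simp only [LinearMap.neg_apply]
    rw [hPℓ t ht]
  have hxα : ∀ s ∈ T, ⁅s, x⁆ = α s • x := hx
  -- the element xb
  set xb := ∑ i ∈ range q, ζ ^ (-(j * (i : ℤ) * (ℓ : ℤ))) • (σ ^ (i * ℓ)) x with hxbdef
  have hxbα : ∀ s ∈ T, ⁅s, xb⁆ = α s • xb := by
    intro s hs
    rw [hxbdef, lie_sum', Finset.smul_sum]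
    refine Finset.sum_congr rfl fun i _ => ?_
    rw [lie_smul, hiter α hPℓ x hxα i s hs, smul_comm]

  have hxbmem : xb ∈ gSpace F L T α := hxbα
  -- decomposition of piJ j x
  have hdecomp : piJ σ m ζ j x
      = (m : F)⁻¹ • ∑ r ∈ range ℓ, ζ ^ (-(j * (r : ℤ))) • (σ ^ r) xb := by
    rw [hpiJ]
    congr 1
    have hgrid : ∑ i ∈ range m, ζ ^ (-(j * (i : ℤ))) • (σ ^ i) x
        = ∑ r ∈ range ℓ, ∑ k ∈ range q,
            ζ ^ (-(j * ((r + k * ℓ : ℕ) : ℤ))) • (σ ^ (r + k * ℓ)) x := by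
      conv_lhs => rw [show m = ℓ * q from hlq.symm]
      exact sum_grid13 ℓ q hℓpos _
    rw [hgrid]
    refine Finset.sum_congr rfl fun r _ => ?_
    rw [hxbdef, map_sum, Finset.smul_sum]
    refine Finset.sum_congr rfl fun k _ => ?_
    rw [map_smul, smul_smul, ← zpow_add₀ hζ0, hmul_apply r (k * ℓ) x]
    exact hzcongr _ _ _ _ (by push_cast; ring) rfl
  have hxb0 : xb ≠ 0 := by
    intro h0
    apply hπj
    rw [hdecomp, h0]
    simp
  -- apply the division property
  obtain ⟨f, hfmem, hbrne, hbrT⟩ := hIARA.ia2' α hα ⟨t₀, ht₀T, ht₀α⟩ xb hxbmem hxb0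
  have hfα : ∀ s ∈ T, ⁅s, f⁆ = (-α) s • f := hfmem
  -- B-nondegeneracy gives B xb f ≠ 0
  have hBh : ∀ s ∈ T, B ⁅xb, f⁆ s = α s * B xb f := by
    intro s hs
    rw [hIARA.ia1.inv xb f s]
    have h2 : ⁅f, s⁆ = α s • f := by
      rw [← lie_skew, hfα s hs]
      simp
    rw [h2, map_smul, smul_eq_mul]
  have hBxbf : B xb f ≠ 0 := by
    intro h0
    apply hbrne
    apply hIARA.ia1.nondegT _ hbrT
    intro s hs
    rw [hBh s hs, h0, mul_zero]
  have hBht0 : B ⁅xb, f⁆ t₀ ≠ 0 := by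
    rw [hBh t₀ ht₀T]
    exact mul_ne_zero ht₀α hBxbf
  -- the element f'
  set f' := (q : F)⁻¹ • ∑ i ∈ range q, ζ ^ (j * (i : ℤ) * (ℓ : ℤ)) • (σ ^ (i * ℓ)) f with hf'def
  have hf'α : ∀ s ∈ T, ⁅s, f'⁆ = (-α) s • f' := by
    intro s hs
    rw [hf'def, lie_smul, lie_sum', smul_comm ((-α) s) ((q : F)⁻¹)]
    congr 1
    rw [Finset.smul_sum]
    refine Finset.sum_congr rfl fun i _ => ?_
    rw [lie_smul, hiter (-α) hPℓneg f hfα i s hs, smul_comm]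
  have hf'mem : f' ∈ gSpace F L T (-α) := hf'α
  -- σ^ℓ eigenvector properties
  have hxbeig : (σ ^ ℓ) xb = ζ ^ (j * (ℓ : ℤ)) • xb := by
    rw [hxbdef, map_sum]
    have h1 : ∀ i ∈ range q, (σ ^ ℓ) (ζ ^ (-(j * (i : ℤ) * (ℓ : ℤ))) • (σ ^ (i * ℓ)) x)
        = ζ ^ ((i : ℤ) * (-(j * (ℓ : ℤ)))) • (fun k : ℕ => (σ ^ (k * ℓ)) x) (i + 1) := by
      intro i _
      rw [map_smul]
      refine hzcongr _ _ _ _ (by ring) ?_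
      simp only
      rw [show (i + 1) * ℓ = ℓ + i * ℓ from by ring, hmul_apply ℓ (i * ℓ) x]
    rw [Finset.sum_congr rfl h1,
      geom_shift13 hζ0 q (-(j * (ℓ : ℤ)))
        (by rw [show (q : ℤ) * (-(j * (ℓ : ℤ))) = (m : ℤ) * (-j) from by
              rw [← hlq]; push_cast; ring]
            exact hZm (-j))
        (fun k : ℕ => (σ ^ (k * ℓ)) x)
        (by rw [show q * ℓ = m from by rw [Nat.mul_comm]; exact hlq, zero_mul, pow_zero, hσmz]; rfl),
      neg_neg]
    congr 1
    exact Finset.sum_congr rfl fun i _ => hzcongr _ _ _ _ (by ring) rfl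
  have hf'eig : (σ ^ ℓ) f' = ζ ^ (-(j * (ℓ : ℤ))) • f' := by
    rw [hf'def, map_smul, map_sum, smul_comm (ζ ^ (-(j * (ℓ : ℤ)))) ((q : F)⁻¹)]
    congr 1
    have h1 : ∀ i ∈ range q, (σ ^ ℓ) (ζ ^ (j * (i : ℤ) * (ℓ : ℤ)) • (σ ^ (i * ℓ)) f)
        = ζ ^ ((i : ℤ) * (j * (ℓ : ℤ))) • (fun k : ℕ => (σ ^ (k * ℓ)) f) (i + 1) := by
      intro i _
      rw [map_smul]
      refine hzcongr _ _ _ _ (by ring) ?_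
      simp only
      rw [show (i + 1) * ℓ = ℓ + i * ℓ from by ring, hmul_apply ℓ (i * ℓ) f]
    rw [Finset.sum_congr rfl h1,
      geom_shift13 hζ0 q (j * (ℓ : ℤ))
        (by rw [show (q : ℤ) * (j * (ℓ : ℤ)) = (m : ℤ) * j from by
              rw [← hlq]; push_cast; ring]
            exact hZm j)
        (fun k : ℕ => (σ ^ (k * ℓ)) f)
        (by rw [show q * ℓ = m from by rw [Nat.mul_comm]; exact hlq, zero_mul, pow_zero, hσmz]; rfl)]
    congr 1
    exact Finset.sum_congr rfl fun i _ => hzcongr _ _ _ _ (by ring) rfl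
  have hxbit : ∀ k : ℕ, (σ ^ (k * ℓ)) xb = ζ ^ (j * (k : ℤ) * (ℓ : ℤ)) • xb := by
    intro k
    induction k with
    | zero =>
      rw [zero_mul, pow_zero]
      simp
    | succ k ihk =>
      rw [show (k + 1) * ℓ = ℓ + k * ℓ from by ring, hmul_apply ℓ (k * ℓ) xb, ihk, map_smul,
        hxbeig, smul_smul, ← zpow_add₀ hζ0]
      exact hzcongr _ _ _ _ (by push_cast; ring) rfl
  have hf'it : ∀ k : ℕ, (σ ^ (k * ℓ)) f' = ζ ^ (-(j * (k : ℤ) * (ℓ : ℤ))) • f' := by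
    intro k
    induction k with
    | zero =>
      rw [zero_mul, pow_zero]
      simp
    | succ k ihk =>
      rw [show (k + 1) * ℓ = ℓ + k * ℓ from by ring, hmul_apply ℓ (k * ℓ) f', ihk, map_smul,
        hf'eig, smul_smul, ← zpow_add₀ hζ0]
      exact hzcongr _ _ _ _ (by push_cast; ring) rfl
  -- the bracket ⁅xb, f'⁆
  have hh' : ⁅xb, f'⁆ = (q : F)⁻¹ • ∑ i ∈ range q, (σ ^ (i * ℓ)) ⁅xb, f⁆ := by
    rw [hf'def, lie_smul, lie_sum']
    congr 1
    refine Finset.sum_congr rfl fun i _ => ?_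
    rw [hpow_lie (i * ℓ) xb f, hxbit i, smul_lie, lie_smul]
  have hh'T : ⁅xb, f'⁆ ∈ T := by
    rw [hh']
    apply T.smul_mem
    rw [← LieSubalgebra.mem_toSubmodule]
    exact Submodule.sum_mem _ fun i _ =>
      T.mem_toSubmodule.mpr (hpowT (i * ℓ) _ hbrT)
  -- expansion of piJ (-j) f'
  have hY : piJ σ m ζ (-j) f' = (ℓ : F)⁻¹ • ∑ r ∈ range ℓ, ζ ^ (j * (r : ℤ)) • (σ ^ r) f' := by
    rw [hpiJ]
    have hgrid : ∑ i ∈ range m, ζ ^ (-((-j) * (i : ℤ))) • (σ ^ i) f'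
        = ∑ r ∈ range ℓ, ∑ k ∈ range q,
            ζ ^ (-((-j) * ((r + k * ℓ : ℕ) : ℤ))) • (σ ^ (r + k * ℓ)) f' := by
      conv_lhs => rw [show m = ℓ * q from hlq.symm]
      exact sum_grid13 ℓ q hℓpos _
    rw [hgrid]
    have hterm : ∀ r ∈ range ℓ,
        ∑ k ∈ range q, ζ ^ (-((-j) * ((r + k * ℓ : ℕ) : ℤ))) • (σ ^ (r + k * ℓ)) f'
          = (q : F) • (ζ ^ (j * (r : ℤ)) • (σ ^ r) f') := by
      intro r _
      have h1 : ∀ k ∈ range q, ζ ^ (-((-j) * ((r + k * ℓ : ℕ) : ℤ))) • (σ ^ (r + k * ℓ)) f'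
          = ζ ^ (j * (r : ℤ)) • (σ ^ r) f' := by
        intro k _
        rw [hmul_apply r (k * ℓ) f', hf'it k, map_smul, smul_smul, ← zpow_add₀ hζ0]
        exact hzcongr _ _ _ _ (by push_cast; ring) rfl
      rw [Finset.sum_congr rfl h1, Finset.sum_const, card_range, Nat.cast_smul_eq_nsmul]
    rw [Finset.sum_congr rfl hterm, ← Finset.smul_sum, smul_smul]
    congr 1
    rw [← hlq]
    push_cast
    field_simp
  -- σ-invariance of the bracket
  have hσc : σ ⁅piJ σ m ζ j x, piJ σ m ζ (-j) f'⁆ = ⁅piJ σ m ζ j x, piJ σ m ζ (-j) f'⁆ := by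
    rw [hσLie, heig j x, heig (-j) f', smul_lie, lie_smul, smul_smul, ← zpow_add₀ hζ0]
    simp
  -- vanishing brackets with σ-fixed toral elements, then A4
  have hc0 : ∀ t ∈ T, ⁅t, ⁅piJ σ m ζ j x, piJ σ m ζ (-j) f'⁆⁆ = 0 := by
    apply hA4 _ hσc
    intro t htT htσ
    rw [leibniz_lie, hfix t htT htσ α x hxα j, hfix t htT htσ (-α) f' hf'α (-j),
      smul_lie, lie_smul]
    simp only [LinearMap.neg_apply, neg_smul]
    exact add_neg_cancel _
  -- eigenvalue functionals for shifted root vectors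
  have hshifteig : ∀ (β : L →ₗ[F] F) (z : L), (∀ s ∈ T, ⁅s, z⁆ = β s • z) → ∀ r : ℕ, r ≤ m →
      ∀ t ∈ T, ⁅t, (σ ^ r) z⁆ = β ((σ ^ (m - r)) t) • (σ ^ r) z := by
    intro β z hz r hrm t htT
    have hsu : (σ ^ r) ((σ ^ (m - r)) t) = t := by
      rw [← hmul_apply r (m - r) t, show r + (m - r) = m from by omega, hσmz]
    conv_lhs => rw [← hsu]
    rw [← hpow_lie, hz _ (hpowT _ t htT), map_smul]
  -- separation of the diagonal part
  set SS : Finset (ℕ × ℕ) := (range ℓ ×ˢ range ℓ).filter (fun p => p.1 ≠ p.2) with hSdef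
  set w : ℕ × ℕ → L := fun p =>
    (((m : F)⁻¹ * (ℓ : F)⁻¹) * (ζ ^ (-(j * (p.1 : ℤ))) * ζ ^ (j * (p.2 : ℤ)))) •
      ⁅(σ ^ p.1) xb, (σ ^ p.2) f'⁆ with hwdef
  set v : L := ((m : F)⁻¹ * (ℓ : F)⁻¹) • ∑ r ∈ range ℓ, ⁅(σ ^ r) xb, (σ ^ r) f'⁆ with hvdef
  have hcv : ⁅piJ σ m ζ j x, piJ σ m ζ (-j) f'⁆ = v + ∑ p ∈ SS, w p := by
    rw [hdecomp, hY, smul_lie, lie_smul, smul_smul]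
    have hdouble : ⁅∑ r ∈ range ℓ, ζ ^ (-(j * (r : ℤ))) • (σ ^ r) xb,
        ∑ s ∈ range ℓ, ζ ^ (j * (s : ℤ)) • (σ ^ s) f'⁆
        = ∑ p ∈ range ℓ ×ˢ range ℓ,
            (ζ ^ (-(j * (p.1 : ℤ))) * ζ ^ (j * (p.2 : ℤ))) • ⁅(σ ^ p.1) xb, (σ ^ p.2) f'⁆ := by
      rw [sum_lie', Finset.sum_product]
      refine Finset.sum_congr rfl fun r _ => ?_
      rw [smul_lie, lie_sum' _ _ _, Finset.smul_sum]
      refine Finset.sum_congr rfl fun s _ => ?_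
      rw [lie_smul, smul_smul]
    rw [hdouble, Finset.smul_sum]
    have hsplit := Finset.sum_filter_add_sum_filter_not (range ℓ ×ˢ range ℓ)
      (fun p : ℕ × ℕ => p.1 = p.2)
      (fun p : ℕ × ℕ => ((m : F)⁻¹ * (ℓ : F)⁻¹) •
        ((ζ ^ (-(j * (p.1 : ℤ))) * ζ ^ (j * (p.2 : ℤ))) • ⁅(σ ^ p.1) xb, (σ ^ p.2) f'⁆))
    rw [← hsplit]
    congr 1
    · -- diagonal part equals v
      rw [hvdef, Finset.smul_sum]
      refine Finset.sum_nbij' (fun p => p.1) (fun r => (r, r)) ?_ ?_ ?_ ?_ ?_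
      · intro p hp
        rw [Finset.mem_filter, Finset.mem_product] at hp
        exact hp.1.1
      · intro r hr
        rw [Finset.mem_filter, Finset.mem_product]
        exact ⟨⟨hr, hr⟩, rfl⟩
      · intro p hp
        rw [Finset.mem_filter] at hp
        have := hp.2
        exact Prod.ext rfl this
      · intro r _
        rfl
      · intro p hp
        rw [Finset.mem_filter] at hp
        obtain ⟨-, hpd⟩ := hp
        rw [← hpd]
        congr 1
        rw [← zpow_add₀ hζ0, show -(j * (p.1 : ℤ)) + j * (p.1 : ℤ) = 0 from by ring,
          zpow_zero, one_smul]
    · -- off-diagonal part equals ∑ p ∈ SS, w p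
      rw [hSdef]
      refine Finset.sum_congr ?_ fun p _ => ?_
      · rfl
      · rw [hwdef]
        simp only
        rw [smul_smul]
  have hv0 : ∀ t ∈ T, ⁅t, v⁆ = 0 := by
    intro t htT
    rw [hvdef, lie_smul, lie_sum']
    have h1 : ∀ r ∈ range ℓ, ⁅t, ⁅(σ ^ r) xb, (σ ^ r) f'⁆⁆ = 0 := by
      intro r hr
      have hrm : r ≤ m := le_of_lt (lt_of_lt_of_le (mem_range.mp hr) hℓle)
      rw [leibniz_lie, hshifteig α xb hxbα r hrm t htT, hshifteig (-α) f' hf'α r hrm t htT,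
        smul_lie, lie_smul]
      simp only [LinearMap.neg_apply, neg_smul]
      exact add_neg_cancel _
    rw [Finset.sum_congr rfl h1]
    simp
  have hgamma : ∀ p ∈ SS, ∃ γ : L →ₗ[F] F, (∀ t ∈ T, ⁅t, w p⁆ = γ t • w p) ∧ ∃ t ∈ T, γ t ≠ 0 := by
    intro p hp
    rw [hSdef, Finset.mem_filter, Finset.mem_product, mem_range, mem_range] at hp
    obtain ⟨⟨hp1, hp2⟩, hpne⟩ := hp
    have h1m : p.1 ≤ m := by omega
    have h2m : p.2 ≤ m := by omega
    refine ⟨α ∘ₗ ((σ ^ (m - p.1) : L ≃ₗ[F] L) : L →ₗ[F] L)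
        - α ∘ₗ ((σ ^ (m - p.2) : L ≃ₗ[F] L) : L →ₗ[F] L), ?_, ?_⟩
    · intro t htT
      have happ : (α ∘ₗ ((σ ^ (m - p.1) : L ≃ₗ[F] L) : L →ₗ[F] L)
          - α ∘ₗ ((σ ^ (m - p.2) : L ≃ₗ[F] L) : L →ₗ[F] L)) t
          = α ((σ ^ (m - p.1)) t) - α ((σ ^ (m - p.2)) t) := by
        simp
      rw [hwdef]
      simp only
      rw [lie_smul, leibniz_lie, hshifteig α xb hxbα p.1 h1m t htT,
        hshifteig (-α) f' hf'α p.2 h2m t htT, smul_lie, lie_smul, happ]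
      simp only [LinearMap.neg_apply, neg_smul]
      module
    · by_contra hall
      push_neg at hall
      have hEq : ∀ t ∈ T, α ((σ ^ (m - p.1)) t) = α ((σ ^ (m - p.2)) t) := by
        intro t ht
        have h3 := hall t ht
        simp only [LinearMap.sub_apply, LinearMap.coe_comp, Function.comp_apply,
          LinearEquiv.coe_coe, sub_eq_zero] at h3
        exact h3
      rcases Nat.lt_or_ge p.1 p.2 with hlt | hge
      · obtain ⟨u, huT, hune⟩ := hℓmin (p.2 - p.1) (by omega) (by omega)
        apply hune
        have h2 := hEq ((σ ^ p.2) u) (hpowT _ u huT)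
        rw [← hmul_apply (m - p.1) p.2 u, ← hmul_apply (m - p.2) p.2 u,
          show m - p.1 + p.2 = (p.2 - p.1) + m from by omega,
          show m - p.2 + p.2 = m from by omega,
          hmul_apply (p.2 - p.1) m u, hσmz] at h2
        exact h2
      · have hlt2 : p.2 < p.1 := by omega
        obtain ⟨u, huT, hune⟩ := hℓmin (p.1 - p.2) (by omega) (by omega)
        apply hune
        have h2 := hEq ((σ ^ p.1) u) (hpowT _ u huT)
        rw [← hmul_apply (m - p.1) p.1 u, ← hmul_apply (m - p.2) p.1 u,
          show m - p.1 + p.1 = m from by omega,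
          show m - p.2 + p.1 = (p.1 - p.2) + m from by omega,
          hmul_apply (p.1 - p.2) m u, hσmz] at h2
        exact h2.symm
  have hsub : ⁅piJ σ m ζ j x, piJ σ m ζ (-j) f'⁆ - v = 0 := by
    refine sep_aux13 T SS w _ ?_ hgamma ?_
    · intro t htT
      rw [lie_sub, hc0 t htT, hv0 t htT, sub_zero]
    · rw [hcv, add_sub_cancel_left]
  have hceq : ⁅piJ σ m ζ j x, piJ σ m ζ (-j) f'⁆ = v := sub_eq_zero.mp hsub
  have hv2 : v = ((m : F)⁻¹ * (ℓ : F)⁻¹) • ∑ r ∈ range ℓ, (σ ^ r) ⁅xb, f'⁆ := by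
    rw [hvdef]
    congr 1
    exact Finset.sum_congr rfl fun r _ => (hpow_lie r xb f').symm
  have hcT : ⁅piJ σ m ζ j x, piJ σ m ζ (-j) f'⁆ ∈ T := by
    rw [hceq, hv2]
    apply T.smul_mem
    rw [← LieSubalgebra.mem_toSubmodule]
    exact Submodule.sum_mem _ fun r _ => T.mem_toSubmodule.mpr (hpowT r _ hh'T)
  have hBfix : ∀ (k : ℕ) (z : L), B ((σ ^ k) z) t₀ = B z t₀ := by
    intro k z
    conv_lhs => rw [← hfixpow t₀ ht₀σ k]
    exact hpowB k z t₀
  have hB1 : B ⁅xb, f'⁆ t₀ = B ⁅xb, f⁆ t₀ := by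
    rw [hh', map_smul, LinearMap.smul_apply, map_sum, LinearMap.sum_apply,
      Finset.sum_congr rfl (fun i _ => hBfix (i * ℓ) ⁅xb, f⁆), Finset.sum_const, card_range,
      nsmul_eq_mul, smul_eq_mul]
    field_simp
  have hB2 : B ⁅piJ σ m ζ j x, piJ σ m ζ (-j) f'⁆ t₀ = (m : F)⁻¹ * B ⁅xb, f⁆ t₀ := by
    rw [hceq, hv2, map_smul, LinearMap.smul_apply, map_sum, LinearMap.sum_apply,
      Finset.sum_congr rfl (fun r _ => hBfix r ⁅xb, f'⁆), Finset.sum_const, card_range,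
      nsmul_eq_mul, hB1, smul_eq_mul]
    field_simp
  have hcne : ⁅piJ σ m ζ j x, piJ σ m ζ (-j) f'⁆ ≠ 0 := by
    intro h0
    rw [h0] at hB2
    simp only [map_zero, LinearMap.zero_apply] at hB2
    rcases mul_eq_zero.mp hB2.symm with h | h
    · exact inv_ne_zero hmF h
    · exact hBht0 h
  exact ⟨f', hf'mem, hcne, hcT, hσc⟩
end

section
/- Let g be a Lie algebra with an invariant nondegenerate symmetric ℤ_m-graded bilinear form, and A = ⊕_{λ ∈ Λ} A^λ a unital commutative associative algebra over F graded by a torsion-free abelian group Λ, with a Λ-graded invariant nondegenerate symmetric bilinear form ε. Let ρ : Λ → ℤ_m be a group homomorphism and let g̃ = ⊕_{λ ∈ Λ} g^{ρ(λ)} ⊗ A^λ be the loop algebra inside g ⊗ A with the form (x ⊗ a, y ⊗ b) = (x,y)ε(a,b). Then this form restricted to g̃ is a Λ-graded invariant nondegenerate symmetric bilinear form. -/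
open TensorProduct


/-- Restricted nondegeneracy: a globally nondegenerate graded form pairs
`gr lam` with `gr (-lam)` nondegenerately. -/
lemma stmt16_aux_nd {F M ι : Type*} [Field F] [AddCommGroup M] [Module F M]
    [SubtractionMonoid ι]
    (gr : ι → Submodule F M) (hdec : (⨆ i, gr i) = ⊤)
    (P : LinearMap.BilinForm F M)
    (hnd : ∀ x : M, (∀ y : M, P x y = 0) → x = 0)
    (hgr : ∀ h k : ι, h + k ≠ 0 → ∀ x ∈ gr h, ∀ y ∈ gr k, P x y = 0)
    (lam : ι) (x : M) (hx : x ∈ gr lam) (h : ∀ y ∈ gr (-lam), P x y = 0) :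
    x = 0 := by
  apply hnd
  intro y
  have hy : y ∈ ⨆ i, gr i := hdec ▸ Submodule.mem_top
  refine Submodule.iSup_induction (motive := fun y => P x y = 0) gr hy ?_ (by simp)
    (fun a b ha hb => by show P x (a+b) = 0; rw [map_add, ha, hb, add_zero])
  intro i z hz
  by_cases hi : lam + i = 0
  · have : i = -lam := (neg_eq_of_add_eq_zero_right hi).symm
    exact h z (this ▸ hz)
  · exact hgr lam i hi x hx z hz

/-- Nondegeneracy of the tensor form on the image of a tensor product of
subspaces, given nondegenerate pairings on the factors. -/
lemma stmt16_aux_tensor {F V X : Type*} [Field F]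
    [AddCommGroup V] [Module F V] [AddCommGroup X] [Module F X]
    (P : LinearMap.BilinForm F V) (Q : LinearMap.BilinForm F X)
    (V' W' : Submodule F V) (X' Y' : Submodule F X)
    (hP : ∀ v ∈ V', (∀ w ∈ W', P v w = 0) → v = 0)
    (hQ : ∀ x ∈ X', (∀ y ∈ Y', Q x y = 0) → x = 0)
    (u : V ⊗[F] X)
    (hu : u ∈ LinearMap.range (TensorProduct.map V'.subtype X'.subtype))
    (h0 : ∀ w ∈ W', ∀ y ∈ Y', LinearMap.BilinForm.tmul P Q u (w ⊗ₜ y) = 0) :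
    u = 0 := by
  classical
  obtain ⟨t, rfl⟩ := hu
  set b := Module.Basis.ofVectorSpace F X' with hb
  set e := TensorProduct.equivFinsuppOfBasisRight (M := V') b with he
  set f := e t with hf
  -- key: each coefficient `f i` pairs to zero with all of `W'`
  have key : ∀ j, ∀ w ∈ W', P ((f j : V')) w = 0 := by
    intro j w hw
    -- the element `xw = ∑ P (f i) w • b i` of `X'`
    set xw : X' := ∑ i ∈ f.support, (P (f i : V') w) • b i with hxw
    have hxw0 : xw = 0 := by
      rw [← ZeroMemClass.coe_eq_zero]
      refine hQ xw xw.2 ?_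
      intro y hy
      have hu0 := h0 w hw y hy
      have ht : t = f.sum fun i v => v ⊗ₜ[F] b i := by
        rw [hf, ← TensorProduct.equivFinsuppOfBasisRight_symm_apply b (e t)]
        simp [he]
      rw [ht] at hu0
      rw [Finsupp.sum] at hu0
      simp only [map_sum, TensorProduct.map_tmul, Submodule.coe_subtype,
        LinearMap.sum_apply, LinearMap.BilinForm.tensorDistrib_tmul,
        smul_eq_mul] at hu0
      rw [hxw]
      push_cast [Submodule.coe_sum]
      rw [map_sum, LinearMap.sum_apply]
      rw [← hu0]
      refine Finset.sum_congr rfl fun i _ => ?_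
      simp [mul_comm]
    -- read off the `j`-th coordinate
    by_cases hj : j ∈ f.support
    · have := congrArg (fun z => b.repr z j) hxw0
      simp only [hxw, map_sum, map_smul, Module.Basis.repr_self, map_zero,
        Finsupp.coe_zero, Pi.zero_apply, Finsupp.coe_finset_sum,
        Finset.sum_apply, Finsupp.coe_smul, Pi.smul_apply,
        Finsupp.single_apply, smul_eq_mul, mul_ite, mul_one, mul_zero] at this
      rwa [Finset.sum_ite_eq' f.support j (fun i => P ((f i : V')) w), if_pos hj]
        at this
    · rw [Finsupp.notMem_support_iff.mp hj]
      simp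
  have hf0 : f = 0 := by
    ext j
    have : ((f j : V') : V) = 0 := hP (f j) (f j).2 (key j)
    simpa [ZeroMemClass.coe_eq_zero] using this
  have het : e t = 0 := by rw [← hf, hf0]
  rw [(LinearEquiv.map_eq_zero_iff e).mp het, map_zero]

/-- the bilinear form `(x ⊗ a, y ⊗ b) = (x,y)ε(a,b)` restricted
to the loop algebra `gloop = ⊕_λ g^{ρ(λ)} ⊗ A^λ ⊆ g ⊗ A` is a `Λ`-graded
invariant nondegenerate symmetric bilinear form.  (We realize `g ⊗ A` as
`A ⊗[F] L` with its base-change Lie bracket.) -/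
theorem stmt16 {F L A Λ : Type*} [Field F] [CharZero F]
    [LieRing L] [LieAlgebra F L] [CommRing A] [Algebra F A]
    [AddCommGroup Λ] [DecidableEq Λ]
    (htfΛ : ∀ (n : ℤ) (l : Λ), n • l = 0 → n = 0 ∨ l = 0)
    (m : ℕ) (hm : 0 < m)
    -- the `ℤ_m`-grading of `g` (induced by an order-`m` automorphism):
    (Lgr : ZMod m → Submodule F L)
    (hLdec : DirectSum.IsInternal Lgr)
    -- `B` is an invariant nondegenerate symmetric `ℤ_m`-graded form on `g`:
    (B : LinearMap.BilinForm F L)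
    (hBsymm : ∀ x y : L, B x y = B y x)
    (hBinv : ∀ x y z : L, B ⁅x, y⁆ z = B x ⁅y, z⁆)
    (hBnondeg : ∀ x : L, (∀ y : L, B x y = 0) → x = 0)
    (hBgr : ∀ h k : ZMod m, h + k ≠ 0 → ∀ x ∈ Lgr h, ∀ y ∈ Lgr k, B x y = 0)
    -- the `Λ`-grading of the unital commutative associative algebra `A`:
    (Agr : Λ → Submodule F A)
    (hAdec : DirectSum.IsInternal Agr)
    (hAmul : ∀ lam mu : Λ, ∀ a ∈ Agr lam, ∀ b ∈ Agr mu, a * b ∈ Agr (lam + mu))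
    -- `ε` is a `Λ`-graded invariant nondegenerate symmetric form on `A`:
    (ε : LinearMap.BilinForm F A)
    (hεsymm : ∀ a b : A, ε a b = ε b a)
    (hεinv : ∀ a b c : A, ε (a * b) c = ε a (b * c))
    (hεnondeg : ∀ a : A, (∀ b : A, ε a b = 0) → a = 0)
    (hεgr : ∀ lam mu : Λ, lam + mu ≠ 0 → ∀ a ∈ Agr lam, ∀ b ∈ Agr mu, ε a b = 0)
    (ρ : Λ →+ ZMod m)
    -- the loop algebra `gloop` and its homogeneous components:
    (comp : Λ → Submodule F (A ⊗[F] L))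
    (hcomp : ∀ lam : Λ, comp lam =
      LinearMap.range (TensorProduct.map (Agr lam).subtype (Lgr (ρ lam)).subtype))
    (gloop : Submodule F (A ⊗[F] L)) (hgloop : gloop = ⨆ lam : Λ, comp lam)
    -- the form `(a ⊗ x, b ⊗ y) = ε(a,b)·B(x,y)` on `g ⊗ A`:
    (Bt : LinearMap.BilinForm F (A ⊗[F] L))
    (hBt : Bt = LinearMap.BilinForm.tmul ε B) :
    -- symmetric:
    (∀ u v : A ⊗[F] L, Bt u v = Bt v u) ∧
    -- invariant on `gloop`:
    (∀ u ∈ gloop, ∀ v ∈ gloop, ∀ w ∈ gloop, Bt ⁅u, v⁆ w = Bt u ⁅v, w⁆) ∧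
    -- `Λ`-graded:
    (∀ lam mu : Λ, lam + mu ≠ 0 →
      ∀ u ∈ comp lam, ∀ v ∈ comp mu, Bt u v = 0) ∧
    -- nondegenerate on `gloop`:
    (∀ u ∈ gloop, (∀ v ∈ gloop, Bt u v = 0) → u = 0) := by
  subst hBt hgloop
  set Bt := LinearMap.BilinForm.tmul ε B with hBt
  -- gradedness, proved first since it is used for nondegeneracy
  have hgraded : ∀ lam mu : Λ, lam + mu ≠ 0 →
      ∀ u ∈ comp lam, ∀ v ∈ comp mu, Bt u v = 0 := by
    intro lam mu hne u hu v hv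
    rw [hcomp] at hu hv
    obtain ⟨t, rfl⟩ := hu
    obtain ⟨s, rfl⟩ := hv
    induction t using TensorProduct.induction_on with
    | zero => simp
    | tmul a x =>
      induction s using TensorProduct.induction_on with
      | zero => simp
      | tmul b y =>
        simp only [TensorProduct.map_tmul, Submodule.coe_subtype, hBt,
          LinearMap.BilinForm.tensorDistrib_tmul, smul_eq_mul]
        rw [hεgr lam mu hne a a.2 b b.2, mul_zero]
      | add s1 s2 h1 h2 => rw [map_add, map_add, h1, h2, add_zero]
    | add t1 t2 h1 h2 =>
      rw [map_add, map_add, LinearMap.add_apply, h1, h2, add_zero]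
  refine ⟨?_, ?_, hgraded, ?_⟩
  · -- symmetry
    intro u v
    induction u using TensorProduct.induction_on with
    | zero => simp
    | tmul a x =>
      induction v using TensorProduct.induction_on with
      | zero => simp
      | tmul b y =>
        simp only [hBt, LinearMap.BilinForm.tensorDistrib_tmul, smul_eq_mul]
        rw [hBsymm, hεsymm]
      | add v1 v2 h1 h2 => rw [map_add, h1, h2, map_add, LinearMap.add_apply]
    | add u1 u2 h1 h2 =>
      rw [map_add, LinearMap.add_apply, h1, h2, map_add]
  · -- invariance (holds on all of A ⊗ L)
    intro u hu v hv w hw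
    clear hu hv hw
    induction u using TensorProduct.induction_on with
    | zero => simp
    | tmul a x =>
      induction v using TensorProduct.induction_on with
      | zero => simp
      | tmul b y =>
        induction w using TensorProduct.induction_on with
        | zero => simp
        | tmul c z =>
          rw [LieAlgebra.ExtendScalars.bracket_tmul,
            LieAlgebra.ExtendScalars.bracket_tmul]
          simp only [hBt, LinearMap.BilinForm.tensorDistrib_tmul, smul_eq_mul]
          rw [hεinv, hBinv]
        | add w1 w2 h1 h2 =>
          simp only [lie_add, map_add, LinearMap.add_apply, h1, h2]
      | add v1 v2 h1 h2 =>
        simp only [lie_add, add_lie, map_add, LinearMap.add_apply, h1, h2]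
    | add u1 u2 h1 h2 =>
      simp only [add_lie, map_add, LinearMap.add_apply, h1, h2]
  · -- nondegeneracy on gloop
    intro u hu hperp
    rw [Submodule.mem_iSup_iff_exists_finsupp] at hu
    obtain ⟨f, hf, rfl⟩ := hu
    have hcomp_le : ∀ lam, comp lam ≤ ⨆ lam : Λ, comp lam := fun lam => le_iSup comp lam
    have hzero : ∀ lam, f lam = 0 := by
      intro lam
      refine stmt16_aux_tensor ε B (Agr lam) (Agr (-lam)) (Lgr (ρ lam)) (Lgr (-(ρ lam)))
        (fun v hv h => stmt16_aux_nd Agr hAdec.submodule_iSup_eq_top ε hεnondeg hεgr lam v hv h)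
        (fun x hx h => stmt16_aux_nd Lgr hLdec.submodule_iSup_eq_top B hBnondeg hBgr (ρ lam) x hx h)
        (f lam) (by rw [← hcomp]; exact hf lam) ?_
      intro w hw y hy
      -- w ⊗ y lies in comp (-lam) ⊆ gloop
      have hyρ : y ∈ Lgr (ρ (-lam)) := by rwa [map_neg]
      have hwy : w ⊗ₜ[F] y ∈ comp (-lam) := by
        rw [hcomp]
        exact ⟨(⟨w, hw⟩ : Agr (-lam)) ⊗ₜ (⟨y, hyρ⟩ : Lgr (ρ (-lam))), rfl⟩
      have h1 : ∑ mu ∈ f.support, Bt (f mu) (w ⊗ₜ[F] y) = 0 := by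
        have h2 := hperp _ (hcomp_le (-lam) hwy)
        rw [Finsupp.sum, map_sum, LinearMap.sum_apply] at h2
        exact h2
      rw [Finset.sum_eq_single lam
        (fun mu _ hmu => hgraded mu (-lam) (fun h => hmu (add_neg_eq_zero.mp h))
          (f mu) (hf mu) _ hwy)
        (fun h => by rw [Finsupp.notMem_support_iff.mp h, map_zero,
          LinearMap.zero_apply])] at h1
      exact h1
    have : f = 0 := Finsupp.ext hzero
    rw [this, Finsupp.sum_zero_index]
end

section
/- Let (g,T) be an IARA such that T is a splitting Cartan subalgebra (T = g_0), σ an automorphism satisfying (A1)–(A4), Λ a torsion-free abelian group with epimorphism ρ : Λ → ℤ_m, and A a predivision Λ-graded unital commutative associative algebra with A^0 = F and supp_Λ A = Λ (with ε as before). Then in the affinization ĝ = L_ρ(g,A) ⊕ V ⊕ V†, the subalgebra T̂ = (T^0 ⊗ 1) ⊕ V ⊕ V† is a splitting Cartan subalgebra of ĝ, i.e. ĝ_0 = T̂. -/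
open Finset

open TensorProduct

/-- The `ζ^n`-eigenspace of a linear automorphism. -/
def eigSp {F L : Type*} [Field F] [AddCommGroup L] [Module F L]
    (σ : L ≃ₗ[F] L) (ζ : F) (n : ℕ) : Submodule F L where
  carrier := {x | σ x = ζ ^ n • x}
  add_mem' := by
    intro a b ha hb
    simp only [Set.mem_setOf_eq] at *
    rw [map_add, ha, hb, smul_add]
  zero_mem' := by simp
  smul_mem' := by
    intro c x hx
    simp only [Set.mem_setOf_eq] at *
    rw [map_smul, hx, smul_comm]

set_option maxHeartbeats 2000000 in
/-- in the affinization `ĝ = L_ρ(g,A) ⊕ V ⊕ V†` of an IARA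
`(g,T)` whose `T` is a splitting Cartan subalgebra, with `σ` satisfying
(A1)–(A4) and `A⁰ = F`, the subalgebra `T̂ = (T⁰ ⊗ 1) ⊕ V ⊕ V†` is a
splitting Cartan subalgebra of `ĝ`, i.e. `ĝ₀ = T̂`. -/
theorem stmt19 {F L A Λ ι H : Type*} [Field F] [CharZero F]
    [LieRing L] [LieAlgebra F L] [CommRing A] [Algebra F A]
    [AddCommGroup Λ] [DecidableEq Λ] [LieRing H] [LieAlgebra F H]
    -- `(g, T)` is an IARA with root system `R`, form `B`, and `T` a
    -- splitting Cartan subalgebra (`g₀ = T`):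
    (T : LieSubalgebra F L) (R : Set (L →ₗ[F] F))
    (B : LinearMap.BilinForm F L) (hIARA : IsIARA F L B T R)
    (hsplit : gSpace F L T (0 : L →ₗ[F] F) = T.toSubmodule)
    -- `σ` satisfies (A1)–(A4):
    (m : ℕ) (hm : 0 < m) (ζ : F) (hζ : IsPrimitiveRoot ζ m)
    (σ : L ≃ₗ[F] L) (hσLie : ∀ x y : L, σ ⁅x, y⁆ = ⁅σ x, σ y⁆)
    (hσm : σ ^ m = 1) (hσT : ∀ t ∈ T, σ t ∈ T)
    (hσB : ∀ x y : L, B (σ x) (σ y) = B x y)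
    (hA4 : A4Cond T σ)
    -- `Λ` torsion free, `ρ : Λ → ℤ_m` an epimorphism:
    (htfΛ : ∀ (n : ℤ) (l : Λ), n • l = 0 → n = 0 ∨ l = 0)
    (ρ : Λ →+ ZMod m) (hρ : Function.Surjective ρ)
    -- `A` predivision `Λ`-graded, unital commutative, `A⁰ = F`:
    (Agr : Λ → Submodule F A)
    (hAdec : DirectSum.IsInternal Agr)
    (hAmul : ∀ lam mu : Λ, ∀ a ∈ Agr lam, ∀ b ∈ Agr mu, a * b ∈ Agr (lam + mu))
    (hA1 : (1 : A) ∈ Agr 0)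
    (hA0 : Agr (0 : Λ) = Submodule.span F {(1 : A)})
    (hApredivision : ∀ lam : Λ, Agr lam ≠ ⊥ ∧
      ∃ a ∈ Agr lam, ∃ b ∈ Agr (-lam), a * b = 1)
    -- `ε` graded invariant nondegenerate symmetric, `ε(1,1) ≠ 0`:
    (ε : LinearMap.BilinForm F A)
    (hεsymm : ∀ a b : A, ε a b = ε b a)
    (hεinv : ∀ a b c : A, ε (a * b) c = ε a (b * c))
    (hεnondeg : ∀ a : A, (∀ b : A, ε a b = 0) → a = 0)
    (hεgr : ∀ lam mu : Λ, lam + mu ≠ 0 → ∀ a ∈ Agr lam, ∀ b ∈ Agr mu, ε a b = 0)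
    (hε11 : ε 1 1 ≠ 0)
    -- a basis of `V = F ⊗_ℤ Λ` consisting of elements of `Λ`:
    (bV : Module.Basis ι F (F ⊗[ℤ] Λ)) (lamb : ι → Λ)
    (hbV : ∀ i : ι, bV i = (1 : F) ⊗ₜ[ℤ] lamb i)
    -- structure maps of `ĝ = L_ρ(g,A) ⊕ V ⊕ V†`; the twisted loop algebra is
    -- `g̃ = ⊕_λ (g^{ρ(λ)} ⊗ A^λ)`:
    (gloop : Submodule F (A ⊗[F] L))
    (hgloop : gloop = ⨆ lam : Λ, LinearMap.range
      (TensorProduct.map (Agr lam).subtype (eigSp σ ζ ((ρ lam).val)).subtype))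
    (Φ : (A ⊗[F] L) →ₗ[F] H) (Ψ : (F ⊗[ℤ] Λ) →ₗ[F] H) (X : (ι →₀ F) →ₗ[F] H)
    (hspan : Submodule.map Φ gloop ⊔ LinearMap.range Ψ ⊔ LinearMap.range X = ⊤)
    (hinj : ∀ u ∈ gloop, ∀ (v : F ⊗[ℤ] Λ) (d : ι →₀ F),
      Φ u + Ψ v + X d = 0 → u = 0 ∧ v = 0 ∧ d = 0)
    -- the affinization bracket (on homogeneous elements of the loop algebra):
    (hbrV : ∀ (v : F ⊗[ℤ] Λ) (h : H), ⁅Ψ v, h⁆ = 0)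
    (hbrD : ∀ (i : ι) (lam : Λ), ∀ a ∈ Agr lam,
      ∀ x ∈ eigSp σ ζ ((ρ lam).val),
      ⁅X (Finsupp.single i 1), Φ (a ⊗ₜ[F] x)⁆ =
        (bV.repr ((1 : F) ⊗ₜ[ℤ] lam) i) • Φ (a ⊗ₜ[F] x))
    (hbrDD : ∀ d e : ι →₀ F, ⁅X d, X e⁆ = 0)
    (hbrG : ∀ (lam mu : Λ), ∀ a ∈ Agr lam, ∀ b ∈ Agr mu,
      ∀ x ∈ eigSp σ ζ ((ρ lam).val), ∀ y ∈ eigSp σ ζ ((ρ mu).val),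
      ⁅Φ (a ⊗ₜ[F] x), Φ (b ⊗ₜ[F] y)⁆ =
        Φ ((a * b) ⊗ₜ[F] ⁅x, y⁆) + (ε a b * B x y) • Ψ ((1 : F) ⊗ₜ[ℤ] lam))
    -- the affinization form:
    (BH : LinearMap.BilinForm F H)
    (hBHsymm : ∀ h k : H, BH h k = BH k h)
    (hBHg : ∀ (a b : A) (x y : L),
      BH (Φ (a ⊗ₜ[F] x)) (Φ (b ⊗ₜ[F] y)) = ε a b * B x y)
    (hBHVV : ∀ v w : F ⊗[ℤ] Λ, BH (Ψ v) (Ψ w) = 0)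
    (hBHDD : ∀ d e : ι →₀ F, BH (X d) (X e) = 0)
    (hBHVg : ∀ (v : F ⊗[ℤ] Λ) (u : A ⊗[F] L), BH (Ψ v) (Φ u) = 0)
    (hBHDg : ∀ (d : ι →₀ F) (u : A ⊗[F] L), BH (X d) (Φ u) = 0)
    (hBHVD : ∀ (v : F ⊗[ℤ] Λ) (d : ι →₀ F),
      BH (Ψ v) (X d) = d.sum fun i c => c * bV.repr v i)
    -- `T̂ = (T⁰ ⊗ 1) ⊕ V ⊕ V†`:
    (Th : LieSubalgebra F H)
    (hTh : ∀ h : H, h ∈ Th ↔ ∃ t ∈ T, σ t = t ∧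
      ∃ (v : F ⊗[ℤ] Λ) (d : ι →₀ F),
        h = Φ ((1 : A) ⊗ₜ[F] t) + Ψ v + X d) :
    -- conclusion: `T̂` is a splitting Cartan subalgebra of `ĝ`, i.e.
    -- `ĝ₀ = T̂`:
    gSpace F H Th (0 : H →ₗ[F] F) = Th.toSubmodule := by
  classical
  have : NeZero m := ⟨hm.ne'⟩
  -- the graded components of the loop algebra
  set M : Λ → Submodule F (A ⊗[F] L) := fun lam => LinearMap.range
      (TensorProduct.map (Agr lam).subtype (eigSp σ ζ ((ρ lam).val)).subtype) with hM
  have hMle : ∀ lam : Λ, M lam ≤ gloop := by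
    intro lam
    rw [hgloop]
    exact le_iSup (fun lam => LinearMap.range
      (TensorProduct.map (Agr lam).subtype (eigSp σ ζ ((ρ lam).val)).subtype)) lam
  -- membership in eigenspace 0 is being fixed
  have heig0 : ∀ x : L, x ∈ eigSp σ ζ ((ρ (0 : Λ)).val) ↔ σ x = x := by
    intro x
    have h0 : ((ρ (0 : Λ)).val) = 0 := by rw [map_zero]; exact ZMod.val_zero
    constructor
    · intro hx
      have : σ x = ζ ^ ((ρ (0 : Λ)).val) • x := hx
      rw [h0] at this; simpa using this
    · intro hx
      show σ x = ζ ^ ((ρ (0 : Λ)).val) • x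
      rw [h0]; simpa using hx
  -- pure fixed tensors lie in M 0
  have hMem0 : ∀ x : L, σ x = x → (1 : A) ⊗ₜ[F] x ∈ M 0 := by
    intro x hx
    exact ⟨(⟨(1 : A), hA1⟩ : Agr 0) ⊗ₜ[F] (⟨x, (heig0 x).2 hx⟩ : eigSp σ ζ ((ρ (0 : Λ)).val)),
      by simp [TensorProduct.map_tmul]⟩
  -- Φ is injective on gloop
  have hPhiInj : ∀ u ∈ gloop, Φ u = 0 → u = 0 := by
    intro u hu h0
    exact (hinj u hu 0 0 (by simp [h0])).1
  -- T is abelian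
  have hTab : ∀ t ∈ T, ∀ s ∈ T, ⁅t, s⁆ = (0 : L) := by
    intro t ht s hs
    have hs' : s ∈ gSpace F L T (0 : L →ₗ[F] F) := by
      rw [hsplit]; exact hs
    simpa using hs' t ht
  -- generators belong to Th
  have hThX : ∀ d : ι →₀ F, X d ∈ Th := by
    intro d
    rw [hTh]
    refine ⟨0, T.zero_mem, map_zero σ, 0, d, ?_⟩
    simp
  have hThV : ∀ v : F ⊗[ℤ] Λ, Ψ v ∈ Th := by
    intro v
    rw [hTh]
    refine ⟨0, T.zero_mem, map_zero σ, v, 0, ?_⟩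
    simp
  have hThT : ∀ t ∈ T, σ t = t → Φ ((1 : A) ⊗ₜ[F] t) ∈ Th := by
    intro t ht hσt
    rw [hTh]
    exact ⟨t, ht, hσt, 0, 0, by simp⟩
  -- bracket of a basic X with a homogeneous loop element
  have hbrD' : ∀ (i : ι) (lam : Λ), ∀ w ∈ M lam,
      ⁅X (Finsupp.single i 1), Φ w⁆ = (bV.repr ((1 : F) ⊗ₜ[ℤ] lam) i) • Φ w := by
    intro i lam w hw
    obtain ⟨z, rfl⟩ := hw
    induction z using TensorProduct.induction_on with
    | zero => simp
    | tmul p q =>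
      have := hbrD i lam (p : A) p.2 (q : L) q.2
      simpa [TensorProduct.map_tmul] using this
    | add z₁ z₂ h1 h2 =>
      rw [map_add, map_add, lie_add, h1, h2, smul_add]
  have lieSumLeft : ∀ {γ : Type _} (s : Finset γ) (g : γ → H) (y : H),
      ⁅∑ i ∈ s, g i, y⁆ = ∑ i ∈ s, ⁅g i, y⁆ := by
    intro γ s g y
    induction s using Finset.induction with
    | empty => simp
    | insert _ _ hns ih => rw [Finset.sum_insert hns, Finset.sum_insert hns, add_lie, ih]
  have lieSumRight : ∀ {γ : Type _} (s : Finset γ) (g : γ → H) (y : H),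
      ⁅y, ∑ i ∈ s, g i⁆ = ∑ i ∈ s, ⁅y, g i⁆ := by
    intro γ s g y
    induction s using Finset.induction with
    | empty => simp
    | insert _ _ hns ih => rw [Finset.sum_insert hns, Finset.sum_insert hns, lie_add, ih]
  -- bracket of a general X with a homogeneous loop element
  have hbrDgen : ∀ (d : ι →₀ F) (lam : Λ), ∀ w ∈ M lam,
      ⁅X d, Φ w⁆ = (d.sum fun i c => c * bV.repr ((1 : F) ⊗ₜ[ℤ] lam) i) • Φ w := by
    intro d lam w hw
    have hd : X d = d.sum fun i c => c • X (Finsupp.single i 1) := by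
      conv_lhs => rw [← Finsupp.sum_single d]
      rw [map_finsuppSum]
      refine Finsupp.sum_congr fun i _ => ?_
      rw [← Finsupp.smul_single_one, map_smul]
    rw [hd]
    rw [Finsupp.sum, Finsupp.sum, lieSumLeft, Finset.sum_smul]
    refine Finset.sum_congr rfl fun i _ => ?_
    rw [smul_lie, hbrD' i lam w hw, smul_smul]
  -- bracket of X with Φ(1 ⊗ t) for fixed t vanishes
  have hXt : ∀ (d : ι →₀ F) (x : L), σ x = x → ⁅X d, Φ ((1 : A) ⊗ₜ[F] x)⁆ = 0 := by
    intro d x hx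
    rw [hbrDgen d 0 _ (hMem0 x hx)]
    have h0 : ((1 : F) ⊗ₜ[ℤ] (0 : Λ)) = (0 : F ⊗[ℤ] Λ) := TensorProduct.tmul_zero _ _
    have : (d.sum fun i c => c * bV.repr ((1 : F) ⊗ₜ[ℤ] (0 : Λ)) i) = 0 := by
      rw [h0]
      simp [Finsupp.sum]
    rw [this, zero_smul]
  -- bracket of Φ(1⊗t) with Φ(1⊗s) for commuting fixed elements vanishes
  have htt : ∀ t ∈ T, σ t = t → ∀ x : L, σ x = x → ⁅t, x⁆ = 0 →
      ⁅Φ ((1 : A) ⊗ₜ[F] t), Φ ((1 : A) ⊗ₜ[F] x)⁆ = 0 := by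
    intro t ht hσt x hσx htx
    have := hbrG 0 0 (1 : A) hA1 (1 : A) hA1 t ((heig0 t).2 hσt) x ((heig0 x).2 hσx)
    rw [this, htx]
    simp
  -- ===== reverse inclusion : Th ⊆ ĝ₀ =====
  apply le_antisymm
  swap
  · intro h hh
    have hh' : h ∈ Th := hh
    rw [hTh] at hh'
    obtain ⟨t, ht, hσt, v, d, rfl⟩ := hh'
    intro k hk
    rw [hTh] at hk
    obtain ⟨s, hs, hσs, w, e, rfl⟩ := hk
    have hst : ⁅s, t⁆ = (0 : L) := hTab s hs t ht
    have e1 : ⁅Φ ((1 : A) ⊗ₜ[F] s), Φ ((1 : A) ⊗ₜ[F] t)⁆ = 0 := htt s hs hσs t hσt hst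
    have e2 : ⁅Φ ((1 : A) ⊗ₜ[F] s), Ψ v⁆ = 0 := by
      rw [← lie_skew, hbrV, neg_zero]
    have e3 : ⁅Φ ((1 : A) ⊗ₜ[F] s), X d⁆ = 0 := by
      rw [← lie_skew, hXt d s hσs, neg_zero]
    have e4 : ⁅X e, Φ ((1 : A) ⊗ₜ[F] t)⁆ = 0 := hXt e t hσt
    have e5 : ⁅X e, Ψ v⁆ = 0 := by rw [← lie_skew, hbrV, neg_zero]
    simp only [add_lie, lie_add, hbrV, e1, e2, e3, e4, e5, hbrDD, add_zero, zero_add,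
      LinearMap.zero_apply, zero_smul]
  -- ===== forward inclusion : ĝ₀ ⊆ Th =====
  intro h hh
  have hcen : ∀ k ∈ Th, ⁅k, h⁆ = 0 := by
    intro k hk
    have := hh k hk
    simpa using this
  -- decompose h
  have hmem : h ∈ Submodule.map Φ gloop ⊔ LinearMap.range Ψ ⊔ LinearMap.range X := by
    rw [hspan]; trivial
  obtain ⟨y, hy, -, ⟨d, rfl⟩, rfl⟩ := Submodule.mem_sup.mp hmem
  obtain ⟨-, ⟨u, hu, rfl⟩, -, ⟨v, rfl⟩, rfl⟩ := Submodule.mem_sup.mp hy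
  -- conditions coming from X and from T⁰
  have condX : ∀ d' : ι →₀ F, ⁅X d', Φ u⁆ = 0 := by
    intro d'
    have h0 := hcen (X d') (hThX d')
    have e5 : ⁅X d', Ψ v⁆ = 0 := by rw [← lie_skew, hbrV, neg_zero]
    rw [lie_add, lie_add, e5, hbrDD, add_zero, add_zero] at h0
    exact h0
  -- decompose u into graded components
  rw [hgloop] at hu
  have hu' : u ∈ ⨆ lam, M lam := hu
  obtain ⟨f, hf, hfu⟩ := (Submodule.mem_iSup_iff_exists_finsupp M u).mp hu'
  -- the graded projections on A
  set eA := LinearEquiv.ofBijective (DirectSum.coeLinearMap Agr) hAdec with heA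
  set P : Λ → (A →ₗ[F] A) := fun mu =>
    (Agr mu).subtype ∘ₗ (DirectSum.component F Λ (fun l => ↥(Agr l)) mu) ∘ₗ
      eA.symm.toLinearMap with hP
  have hPsame : ∀ (mu : Λ) (a : A), a ∈ Agr mu → P mu a = a := by
    intro mu a ha
    have h1 : (eA.symm a) mu = ⟨a, ha⟩ := by
      rw [heA]; exact hAdec.ofBijective_coeLinearMap_of_mem ha
    show ((Agr mu).subtype) ((DirectSum.component F Λ (fun l => ↥(Agr l)) mu) (eA.symm a)) = a
    rw [← DirectSum.apply_eq_component, h1]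
    rfl
  have hPne : ∀ (lam mu : Λ), lam ≠ mu → ∀ a : A, a ∈ Agr lam → P mu a = 0 := by
    intro lam mu hne a ha
    have h1 : (eA.symm a) mu = 0 := by
      rw [heA]; exact hAdec.ofBijective_coeLinearMap_of_mem_ne hne ha
    show ((Agr mu).subtype) ((DirectSum.component F Λ (fun l => ↥(Agr l)) mu) (eA.symm a)) = 0
    rw [← DirectSum.apply_eq_component, h1, map_zero]
  -- the induced projections on the loop algebra
  set Q : Λ → ((A ⊗[F] L) →ₗ[F] (A ⊗[F] L)) := fun mu => LinearMap.rTensor L (P mu) with hQ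
  have hQsame : ∀ (mu : Λ), ∀ w ∈ M mu, Q mu w = w := by
    intro mu w hw
    obtain ⟨z, rfl⟩ := hw
    induction z using TensorProduct.induction_on with
    | zero => simp
    | tmul p q =>
      show (LinearMap.rTensor L (P mu)) (TensorProduct.map _ _ (p ⊗ₜ[F] q)) = _
      rw [TensorProduct.map_tmul, LinearMap.rTensor_tmul]
      simp only [Submodule.coe_subtype]
      rw [hPsame mu (p : A) p.2]
    | add z₁ z₂ h1 h2 =>
      rw [map_add, map_add, h1, h2]
  have hQne : ∀ (lam mu : Λ), lam ≠ mu → ∀ w ∈ M lam, Q mu w = 0 := by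
    intro lam mu hne w hw
    obtain ⟨z, rfl⟩ := hw
    induction z using TensorProduct.induction_on with
    | zero => simp
    | tmul p q =>
      show (LinearMap.rTensor L (P mu)) (TensorProduct.map _ _ (p ⊗ₜ[F] q)) = _
      rw [TensorProduct.map_tmul, LinearMap.rTensor_tmul]
      simp only [Submodule.coe_subtype]
      rw [hPne lam mu hne (p : A) p.2, TensorProduct.zero_tmul]
    | add z₁ z₂ h1 h2 =>
      rw [map_add, map_add, h1, h2, add_zero]
  -- each nonzero-degree component of u vanishes
  have hfzero : ∀ mu : Λ, mu ≠ 0 → f mu = 0 := by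
    intro mu hmu
    -- 1 ⊗ mu ≠ 0 in V
    have htens : (1 : F) ⊗ₜ[ℤ] mu ≠ (0 : F ⊗[ℤ] Λ) := by
      have hflat : Module.Flat ℤ F := by
        have : Module.Flat ℤ ℚ := IsLocalization.flat ℚ (nonZeroDivisors ℤ)
        exact Module.Flat.trans ℤ ℚ F
      have hfinj : Function.Injective (LinearMap.toSpanSingleton ℤ Λ mu) := by
        intro a b hab
        have hab' : (a - b) • mu = 0 := by
          simp only [LinearMap.toSpanSingleton_apply] at hab
          rw [sub_smul, hab, sub_self]
        rcases htfΛ _ _ hab' with h1 | h2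
        · omega
        · exact absurd h2 hmu
      have hinj' := Module.Flat.lTensor_preserves_injective_linearMap
        (M := F) (LinearMap.toSpanSingleton ℤ Λ mu) hfinj
      intro hzero
      have hz : (LinearMap.lTensor F (LinearMap.toSpanSingleton ℤ Λ mu))
          ((1 : F) ⊗ₜ[ℤ] (1 : ℤ)) = 0 := by
        simp [LinearMap.toSpanSingleton_apply, hzero]
      have h1 : (1 : F) ⊗ₜ[ℤ] (1 : ℤ) = 0 := hinj' (by simpa using hz)
      have := congrArg (TensorProduct.rid ℤ F) h1
      simp at this
    obtain ⟨i, hi⟩ : ∃ i : ι, bV.repr ((1 : F) ⊗ₜ[ℤ] mu) i ≠ 0 := by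
      by_contra hc
      push_neg at hc
      apply htens
      have hr : bV.repr ((1 : F) ⊗ₜ[ℤ] mu) = bV.repr 0 := by
        rw [map_zero]; exact Finsupp.ext fun i => hc i
      exact bV.repr.injective hr
    -- the i-th derivation condition
    have hXi := condX (Finsupp.single i 1)
    have hexp : ⁅X (Finsupp.single i 1), Φ u⁆ =
        Φ (f.sum fun lam w => (bV.repr ((1 : F) ⊗ₜ[ℤ] lam) i) • w) := by
      rw [← hfu, Finsupp.sum, Finsupp.sum, map_sum, map_sum, lieSumRight]
      refine Finset.sum_congr rfl fun lam _ => ?_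
      rw [hbrD' i lam (f lam) (hf lam), map_smul]
    have hsum_mem : (f.sum fun lam w => (bV.repr ((1 : F) ⊗ₜ[ℤ] lam) i) • w) ∈ gloop := by
      refine Submodule.sum_mem _ fun lam _ => ?_
      exact Submodule.smul_mem _ _ (hMle lam (hf lam))
    have hzero : (f.sum fun lam w => (bV.repr ((1 : F) ⊗ₜ[ℤ] lam) i) • w) = 0 :=
      hPhiInj _ hsum_mem (by rw [← hexp, hXi])
    -- apply the projection Q mu
    have hproj := congrArg (Q mu) hzero
    rw [map_zero, Finsupp.sum, map_sum] at hproj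
    have hterm : ∀ lam ∈ f.support,
        Q mu ((bV.repr ((1 : F) ⊗ₜ[ℤ] lam) i) • f lam) =
          if lam = mu then (bV.repr ((1 : F) ⊗ₜ[ℤ] lam) i) • f lam else 0 := by
      intro lam _
      by_cases hc : lam = mu
      · rw [if_pos hc, map_smul, hQsame mu (f lam) (hc ▸ hf lam)]
      · rw [if_neg hc, map_smul, hQne lam mu hc (f lam) (hf lam), smul_zero]
    rw [Finset.sum_congr rfl hterm, Finset.sum_ite_eq' f.support mu] at hproj
    by_cases hmem : mu ∈ f.support
    · rw [if_pos hmem] at hproj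
      rcases smul_eq_zero.mp hproj with h1 | h2
      · exact absurd h1 hi
      · exact h2
    · exact Finsupp.notMem_support_iff.mp hmem
  -- hence u lies in degree 0
  have hu0 : u = f 0 := by
    rw [← hfu]
    refine Finsupp.sum_eq_single 0 (fun lam hlam hne => ?_) (fun _ => rfl)
    exact absurd (hfzero lam hne) hlam
  have huM0 : u ∈ M 0 := hu0 ▸ hf 0
  -- u = 1 ⊗ x with σ x = x
  have hshape' : ∀ w ∈ M 0, ∃ x : L, σ x = x ∧ w = (1 : A) ⊗ₜ[F] x := by
    intro w hw
    obtain ⟨z, rfl⟩ := hw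
    induction z using TensorProduct.induction_on with
    | zero => exact ⟨0, map_zero σ, by rw [map_zero, TensorProduct.tmul_zero]⟩
    | tmul p q =>
      have hp : (p : A) ∈ Submodule.span F {(1 : A)} := by rw [← hA0]; exact p.2
      obtain ⟨c, hc⟩ := Submodule.mem_span_singleton.mp hp
      refine ⟨c • (q : L), by rw [map_smul, (heig0 (q : L)).mp q.2], ?_⟩
      show (TensorProduct.map _ _) (p ⊗ₜ[F] q) = _
      rw [TensorProduct.map_tmul]
      simp only [Submodule.coe_subtype]
      rw [← hc, TensorProduct.smul_tmul]
    | add z₁ z₂ h1 h2 =>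
      obtain ⟨x₁, hx₁, e₁⟩ := h1
      obtain ⟨x₂, hx₂, e₂⟩ := h2
      exact ⟨x₁ + x₂, by rw [map_add, hx₁, hx₂],
        by rw [map_add, e₁, e₂, TensorProduct.tmul_add]⟩
  have hshape : ∃ x : L, σ x = x ∧ u = (1 : A) ⊗ₜ[F] x := hshape' u huM0
  obtain ⟨x, hσx, rfl⟩ := hshape
  -- x commutes with T⁰
  have hcomm0 : ∀ t ∈ T, σ t = t → ⁅t, x⁆ = 0 := by
    intro t ht hσt
    have h0 := hcen (Φ ((1 : A) ⊗ₜ[F] t)) (hThT t ht hσt)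
    have e2 : ⁅Φ ((1 : A) ⊗ₜ[F] t), Ψ v⁆ = 0 := by rw [← lie_skew, hbrV, neg_zero]
    have e3 : ⁅Φ ((1 : A) ⊗ₜ[F] t), X d⁆ = 0 := by
      rw [← lie_skew, hXt d t hσt, neg_zero]
    rw [lie_add, lie_add, e2, e3, add_zero, add_zero] at h0
    have hbrG0 := hbrG 0 0 (1 : A) hA1 (1 : A) hA1 t ((heig0 t).2 hσt) x ((heig0 x).2 hσx)
    rw [hbrG0] at h0
    have hψ0 : ((1 : F) ⊗ₜ[ℤ] (0 : Λ)) = (0 : F ⊗[ℤ] Λ) := TensorProduct.tmul_zero _ _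
    rw [hψ0, map_zero, smul_zero, add_zero, one_mul] at h0
    -- Φ (1 ⊗ ⁅t, x⁆) = 0 with 1 ⊗ ⁅t,x⁆ ∈ gloop
    have hfix : σ ⁅t, x⁆ = ⁅t, x⁆ := by rw [hσLie, hσt, hσx]
    have hmem' : (1 : A) ⊗ₜ[F] ⁅t, x⁆ ∈ gloop := hMle 0 (hMem0 _ hfix)
    have htens0 : (1 : A) ⊗ₜ[F] ⁅t, x⁆ = 0 := hPhiInj _ hmem' h0
    -- retraction along ε
    have := congrArg ((TensorProduct.lid F L).toLinearMap ∘ₗ LinearMap.rTensor L (ε 1)) htens0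
    simp only [map_zero, LinearMap.comp_apply, LinearMap.rTensor_tmul] at this
    rw [LinearEquiv.coe_toLinearMap, TensorProduct.lid_tmul] at this
    have hε : ε 1 1 • ⁅t, x⁆ = 0 := this
    rcases smul_eq_zero.mp hε with h1 | h2
    · exact absurd h1 hε11
    · exact h2
  -- by (A4), x commutes with all of T, hence x ∈ g₀ = T
  have hcomm : ∀ t ∈ T, ⁅t, x⁆ = 0 := hA4 x hσx hcomm0
  have hxT : x ∈ T := by
    have : x ∈ gSpace F L T (0 : L →ₗ[F] F) := by
      intro t ht
      simpa using hcomm t ht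
    rw [hsplit] at this
    exact this
  show Φ ((1 : A) ⊗ₜ[F] x) + Ψ v + X d ∈ Th
  rw [hTh]
  exact ⟨x, hxT, hσx, v, d, rfl⟩
end
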